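/- arXiv:0804.3169 — 3 statements merged into one kernel-verified Lean document; each statement's English description precedes it below -/
import Mathlib

section
/- Let X be a Lévy process and let γ>0 satisfy E[e^{γ X_1}]=1. Then for every x>0, P(τ(x)<∞) ≤ e^{−γ x}, i.e. e^{γ x} P(∃ t≥0 : X_t > x) ≤ 1. -/
open MeasureTheory ProbabilityTheory Filter Set
open scoped ENNReal NNReal

/-- A (real-valued) Lévy process: `X 0 = 0` a.s., a.s. càdlàg paths on `[0,∞)`,
and stationary independent increments. -/
structure LevyProcess {Ω : Type*} [MeasurableSpace Ω] (P : Measure Ω)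
    (X : ℝ → Ω → ℝ) : Prop where
  meas : ∀ t : ℝ, Measurable (X t)
  init : ∀ᵐ ω ∂P, X 0 ω = 0
  rightCont : ∀ᵐ ω ∂P, ∀ t : ℝ, 0 ≤ t →
    ContinuousWithinAt (fun s => X s ω) (Set.Ici t) t
  leftLimits : ∀ᵐ ω ∂P, ∀ t : ℝ, 0 < t →
    ∃ l : ℝ, Filter.Tendsto (fun s => X s ω) (nhdsWithin t (Set.Ico 0 t)) (nhds l)
  stat : ∀ s t : ℝ, 0 ≤ s → s ≤ t →
    Measure.map (fun ω => X t ω - X s ω) P = Measure.map (X (t - s)) P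
  indep : ∀ s t : ℝ, 0 ≤ s → s ≤ t →
    Indep (⨆ u ∈ Set.Icc (0:ℝ) s, MeasurableSpace.comap (X u) inferInstance)
      (MeasurableSpace.comap (fun ω => X t ω - X s ω) inferInstance) P

/-- The Laplace exponent `ψ(θ) = log E[exp (θ W)]`. -/
noncomputable def laplaceExponent {Ω : Type*} [MeasurableSpace Ω] (P : Measure Ω)
    (W : Ω → ℝ) (θ : ℝ) : ℝ :=
  Real.log (∫ ω, Real.exp (θ * W ω) ∂P)

/-- The domain `Θ = {θ : E[exp (θ W)] < ∞}` of the Laplace exponent. -/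
def laplaceDomain {Ω : Type*} [MeasurableSpace Ω] (P : Measure Ω)
    (W : Ω → ℝ) : Set ℝ :=
  {θ : ℝ | Integrable (fun ω => Real.exp (θ * W ω)) P}

section LundbergAux

variable {Ω : Type*} [MeasurableSpace Ω] {P : Measure Ω} [IsProbabilityMeasure P]
  {X : ℝ → Ω → ℝ} {γ : ℝ}

noncomputable def lundG (P : Measure Ω) (X : ℝ → Ω → ℝ) (γ t : ℝ) : ℝ≥0∞ :=
  ∫⁻ ω, ENNReal.ofReal (Real.exp (γ * X t ω)) ∂P

lemma measR (γ : ℝ) : Measurable fun y : ℝ => ENNReal.ofReal (Real.exp (γ * y)) :=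
  ((measurable_id.const_mul γ).exp).ennreal_ofReal

lemma sub_sigma_le (hX : LevyProcess P X) (s : ℝ) :
    (⨆ u ∈ Set.Icc (0:ℝ) s, MeasurableSpace.comap (X u) inferInstance) ≤ ‹MeasurableSpace Ω› :=
  iSup₂_le fun u _ => measurable_iff_comap_le.mp (hX.meas u)

lemma meas_sub_sigma (hX : LevyProcess P X) {s u : ℝ} (hu : u ∈ Set.Icc (0:ℝ) s) :
    Measurable[⨆ u ∈ Set.Icc (0:ℝ) s, MeasurableSpace.comap (X u) inferInstance] (X u) :=
  Measurable.of_comap_le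
    (le_iSup₂ (f := fun u (_ : u ∈ Set.Icc (0:ℝ) s) => MeasurableSpace.comap (X u) inferInstance) u hu)

lemma key_mul (hX : LevyProcess P X) {s t : ℝ} (hs : 0 ≤ s) (hst : s ≤ t)
    {f : Ω → ℝ≥0∞}
    (hf : Measurable[⨆ u ∈ Set.Icc (0:ℝ) s, MeasurableSpace.comap (X u) inferInstance] f) :
    ∫⁻ ω, f ω * ENNReal.ofReal (Real.exp (γ * (X t ω - X s ω))) ∂P
      = (∫⁻ ω, f ω ∂P) * lundG P X γ (t - s) := by
  have hinc : Measurable fun ω => X t ω - X s ω := (hX.meas t).sub (hX.meas s)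
  have hg : Measurable[MeasurableSpace.comap (fun ω => X t ω - X s ω) inferInstance]
      (fun ω => ENNReal.ofReal (Real.exp (γ * (X t ω - X s ω)))) :=
    (measR γ).comp (Measurable.of_comap_le le_rfl)
  rw [lintegral_mul_eq_lintegral_mul_lintegral_of_independent_measurableSpace
    (sub_sigma_le hX s) (measurable_iff_comap_le.mp hinc) (hX.indep s t hs hst) hf hg]
  congr 1
  calc ∫⁻ ω, ENNReal.ofReal (Real.exp (γ * (X t ω - X s ω))) ∂P
      = ∫⁻ y, ENNReal.ofReal (Real.exp (γ * y)) ∂(Measure.map (fun ω => X t ω - X s ω) P) :=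
        (lintegral_map (measR γ) hinc).symm
    _ = ∫⁻ y, ENNReal.ofReal (Real.exp (γ * y)) ∂(Measure.map (X (t - s)) P) := by
        rw [hX.stat s t hs hst]
    _ = lundG P X γ (t - s) := lintegral_map (measR γ) (hX.meas _)

lemma lundG_add (hX : LevyProcess P X) {s t : ℝ} (hs : 0 ≤ s) (ht : 0 ≤ t) :
    lundG P X γ (s + t) = lundG P X γ s * lundG P X γ t := by
  have hf : Measurable[⨆ u ∈ Set.Icc (0:ℝ) s, MeasurableSpace.comap (X u) inferInstance]
      (fun ω => ENNReal.ofReal (Real.exp (γ * X s ω))) :=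
    (measR γ).comp (meas_sub_sigma hX ⟨hs, le_rfl⟩)
  have h := key_mul (γ := γ) hX hs (le_add_of_nonneg_right ht) hf
  rw [add_sub_cancel_left] at h
  calc lundG P X γ (s + t)
      = ∫⁻ ω, ENNReal.ofReal (Real.exp (γ * X s ω)) *
          ENNReal.ofReal (Real.exp (γ * (X (s + t) ω - X s ω))) ∂P := by
        refine lintegral_congr fun ω => ?_
        rw [← ENNReal.ofReal_mul (Real.exp_nonneg _), ← Real.exp_add]
        congr 2
        ring
    _ = lundG P X γ s * lundG P X γ t := h

set_option linter.unusedSectionVars false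
set_option linter.unusedVariables false

lemma lundG_one (hγ : ∫ ω, Real.exp (γ * X 1 ω) ∂P = 1) : lundG P X γ 1 = 1 := by
  have hint : Integrable (fun ω => Real.exp (γ * X 1 ω)) P := by
    by_contra h
    rw [integral_undef h] at hγ
    norm_num at hγ
  unfold lundG
  rw [← ofReal_integral_eq_lintegral_ofReal hint (ae_of_all _ fun ω => (Real.exp_pos _).le), hγ,
    ENNReal.ofReal_one]

lemma lundG_zero (hX : LevyProcess P X) : lundG P X γ 0 = 1 := by
  unfold lundG
  have h : (fun ω => ENNReal.ofReal (Real.exp (γ * X 0 ω))) =ᵐ[P] fun _ => 1 := by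
    filter_upwards [hX.init] with ω h
    simp [h]
  rw [lintegral_congr_ae h, lintegral_one, measure_univ]

lemma lundG_nsmul (hX : LevyProcess P X) (k : ℕ) {a : ℝ} (ha : 0 ≤ a) :
    lundG P X γ ((k : ℝ) * a) = lundG P X γ a ^ k := by
  induction k with
  | zero => simpa using lundG_zero hX
  | succ n ih =>
    have h : ((n + 1 : ℕ) : ℝ) * a = (n : ℝ) * a + a := by push_cast; ring
    rw [h, lundG_add hX (mul_nonneg n.cast_nonneg ha) ha, ih, pow_succ]

lemma lundG_rat (hX : LevyProcess P X) (hγ : ∫ ω, Real.exp (γ * X 1 ω) ∂P = 1)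
    {q : ℚ} (hq : 0 ≤ q) : lundG P X γ (q : ℝ) = 1 := by
  have hden : (0 : ℝ) < (q.den : ℝ) := by exact_mod_cast q.pos
  have ha : (0 : ℝ) ≤ 1 / (q.den : ℝ) := by positivity
  have hone : lundG P X γ (1 / (q.den : ℝ)) ^ q.den = 1 := by
    rw [← lundG_nsmul hX q.den ha, mul_one_div, div_self hden.ne', lundG_one hγ]
  have hGa : lundG P X γ (1 / (q.den : ℝ)) = 1 :=
    (ENNReal.pow_right_strictMono q.den_nz).injective (hone.trans (one_pow _).symm)
  have hnum : (0 : ℤ) ≤ q.num := Rat.num_nonneg.mpr hq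
  have hcast : (q : ℝ) = (q.num.toNat : ℝ) * (1 / (q.den : ℝ)) := by
    have h1 : ((q.num.toNat : ℝ)) = (q.num : ℝ) := by
      exact_mod_cast Int.toNat_of_nonneg hnum
    rw [Rat.cast_def, h1, mul_one_div]
  rw [hcast, lundG_nsmul hX _ ha, hGa, one_pow]

lemma finKey (hX : LevyProcess P X) (hγpos : 0 < γ)
    (hγ : ∫ ω, Real.exp (γ * X 1 ω) ∂P = 1)
    {x : ℝ} (F : Finset ℚ) (hF : ∀ q ∈ F, 0 ≤ q) :
    ENNReal.ofReal (Real.exp (γ * x)) * P {ω | ∃ q : ℚ, q ∈ F ∧ x < X (q : ℝ) ω} ≤ 1 := by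
  classical
  rcases F.eq_empty_or_nonempty with rfl | hne
  · simp
  set T : ℚ := F.max' hne with hTdef
  have hTF : T ∈ F := F.max'_mem hne
  have hT0 : (0 : ℚ) ≤ T := hF T hTF
  set A : ℚ → Set Ω := fun q =>
    {ω | x < X (q : ℝ) ω ∧ ∀ r ∈ F, r < q → X (r : ℝ) ω ≤ x} with hAdef
  -- sub-σ-algebra measurability
  have hA_sub : ∀ q ∈ F, MeasurableSet[⨆ u ∈ Set.Icc (0:ℝ) (q:ℝ),
      MeasurableSpace.comap (X u) inferInstance] (A q) := by
    intro q hq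
    have hAeq : A q = {ω | x < X (q : ℝ) ω} ∩
        ⋂ r ∈ F, ⋂ _ : r < q, {ω | X (r : ℝ) ω ≤ x} := by
      ext ω
      simp [hAdef, Set.mem_iInter]
    rw [hAeq]
    have hq0 : (0:ℚ) ≤ q := hF q hq
    refine MeasurableSet.inter
      (measurableSet_lt measurable_const (meas_sub_sigma hX ⟨by exact_mod_cast hq0, le_rfl⟩)) ?_
    refine MeasurableSet.biInter F.countable_toSet fun r hr => MeasurableSet.iInter fun hrq => ?_
    have hr0 : (0:ℚ) ≤ r := hF r hr
    exact measurableSet_le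
      (meas_sub_sigma hX ⟨by exact_mod_cast hr0, by exact_mod_cast hrq.le⟩) measurable_const
  have hA_amb : ∀ q ∈ F, MeasurableSet (A q) := fun q hq =>
    sub_sigma_le hX (q : ℝ) _ (hA_sub q hq)
  -- disjointness
  have hdisj' : ∀ q ∈ F, ∀ r ∈ F, q < r → Disjoint (A q) (A r) := by
    intro q hq r hr hqr
    rw [Set.disjoint_left]
    rintro ω ⟨h1, _⟩ ⟨_, h2⟩
    exact absurd h1 (not_lt.mpr (h2 q hq hqr))
  have hdisj : (↑F : Set ℚ).PairwiseDisjoint A := by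
    intro q hq r hr hne'
    rcases lt_or_gt_of_ne hne' with h | h
    · exact hdisj' q hq r hr h
    · exact (hdisj' r hr q hq h).symm
  -- cover
  have hcover : {ω | ∃ q : ℚ, q ∈ F ∧ x < X (q : ℝ) ω} = ⋃ q ∈ F, A q := by
    ext ω
    constructor
    · rintro ⟨q, hq, hxq⟩
      set F' := F.filter (fun r : ℚ => x < X (r : ℝ) ω) with hF'def
      have hF'ne : F'.Nonempty := ⟨q, Finset.mem_filter.mpr ⟨hq, hxq⟩⟩
      set q₀ := F'.min' hF'ne with hq₀def
      have hq₀F' : q₀ ∈ F' := F'.min'_mem hF'ne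
      have hq₀F : q₀ ∈ F := (Finset.mem_filter.mp hq₀F').1
      refine Set.mem_biUnion hq₀F ⟨(Finset.mem_filter.mp hq₀F').2, ?_⟩
      intro r hr hrq₀
      by_contra hcon
      push_neg at hcon
      exact absurd (F'.min'_le r (Finset.mem_filter.mpr ⟨hr, hcon⟩)) (not_le.mpr hrq₀)
    · rintro hω
      rcases Set.mem_iUnion₂.mp hω with ⟨q, hq, h1, _⟩
      exact ⟨q, hq, h1⟩
  -- the main estimate
  have hTestim : ∀ q ∈ F,
      ENNReal.ofReal (Real.exp (γ * x)) * P (A q)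
        ≤ ∫⁻ ω in A q, ENNReal.ofReal (Real.exp (γ * X (T : ℝ) ω)) ∂P := by
    intro q hq
    have hq0 : (0:ℚ) ≤ q := hF q hq
    have hq0' : (0:ℝ) ≤ (q:ℝ) := by exact_mod_cast hq0
    have hqT : (q:ℝ) ≤ (T:ℝ) := by exact_mod_cast F.le_max' q hq
    -- step 1: exp(γx) ≤ exp(γ X_q) on A q
    have step1 : ENNReal.ofReal (Real.exp (γ * x)) * P (A q)
        ≤ ∫⁻ ω in A q, ENNReal.ofReal (Real.exp (γ * X (q : ℝ) ω)) ∂P := by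
      rw [← setLIntegral_const (A q) _]
      refine setLIntegral_mono ((measR γ).comp (hX.meas _)) fun ω hω => ?_
      exact ENNReal.ofReal_le_ofReal (Real.exp_le_exp.mpr
        (mul_le_mul_of_nonneg_left hω.1.le hγpos.le))
    -- step 2: insert the independent factor
    have hfq : Measurable[⨆ u ∈ Set.Icc (0:ℝ) (q:ℝ), MeasurableSpace.comap (X u) inferInstance]
        (fun ω => (A q).indicator (fun ω' => ENNReal.ofReal (Real.exp (γ * X (q:ℝ) ω'))) ω) :=
      Measurable.indicator ((measR γ).comp (meas_sub_sigma hX ⟨hq0', le_rfl⟩)) (hA_sub q hq)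
    have hmul := key_mul (γ := γ) hX hq0' hqT hfq
    have hTq1 : lundG P X γ ((T:ℝ) - (q:ℝ)) = 1 := by
      have : ((T - q : ℚ) : ℝ) = (T:ℝ) - (q:ℝ) := by push_cast; ring
      rw [← this]
      exact lundG_rat hX hγ (sub_nonneg.mpr (F.le_max' q hq))
    rw [hTq1, mul_one] at hmul
    -- pointwise identity: indicator * increment = indicator of exp(γ X_T)
    have hpt : ∀ ω, (A q).indicator (fun ω' => ENNReal.ofReal (Real.exp (γ * X (q:ℝ) ω'))) ω *
        ENNReal.ofReal (Real.exp (γ * (X (T:ℝ) ω - X (q:ℝ) ω)))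
        = (A q).indicator (fun ω' => ENNReal.ofReal (Real.exp (γ * X (T:ℝ) ω'))) ω := by
      intro ω
      by_cases hω : ω ∈ A q
      · rw [Set.indicator_of_mem hω, Set.indicator_of_mem hω,
          ← ENNReal.ofReal_mul (Real.exp_nonneg _), ← Real.exp_add]
        congr 2
        ring
      · rw [Set.indicator_of_notMem hω, Set.indicator_of_notMem hω, zero_mul]
    calc ENNReal.ofReal (Real.exp (γ * x)) * P (A q)
        ≤ ∫⁻ ω in A q, ENNReal.ofReal (Real.exp (γ * X (q : ℝ) ω)) ∂P := step1
      _ = ∫⁻ ω, (A q).indicator (fun ω' => ENNReal.ofReal (Real.exp (γ * X (q:ℝ) ω'))) ω ∂P := by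
          rw [lintegral_indicator (hA_amb q hq)]
      _ = ∫⁻ ω, (A q).indicator (fun ω' => ENNReal.ofReal (Real.exp (γ * X (q:ℝ) ω'))) ω *
            ENNReal.ofReal (Real.exp (γ * (X (T:ℝ) ω - X (q:ℝ) ω))) ∂P := hmul.symm
      _ = ∫⁻ ω, (A q).indicator (fun ω' => ENNReal.ofReal (Real.exp (γ * X (T:ℝ) ω'))) ω ∂P :=
          lintegral_congr hpt
      _ = ∫⁻ ω in A q, ENNReal.ofReal (Real.exp (γ * X (T : ℝ) ω)) ∂P := by
          rw [lintegral_indicator (hA_amb q hq)]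
  -- put everything together
  calc ENNReal.ofReal (Real.exp (γ * x)) * P {ω | ∃ q : ℚ, q ∈ F ∧ x < X (q : ℝ) ω}
      = ENNReal.ofReal (Real.exp (γ * x)) * ∑ q ∈ F, P (A q) := by
        rw [hcover, measure_biUnion_finset hdisj hA_amb]
    _ = ∑ q ∈ F, ENNReal.ofReal (Real.exp (γ * x)) * P (A q) := Finset.mul_sum _ _ _
    _ ≤ ∑ q ∈ F, ∫⁻ ω in A q, ENNReal.ofReal (Real.exp (γ * X (T : ℝ) ω)) ∂P :=
        Finset.sum_le_sum hTestim
    _ = ∫⁻ ω in ⋃ q ∈ F, A q, ENNReal.ofReal (Real.exp (γ * X (T : ℝ) ω)) ∂P :=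
        (lintegral_biUnion_finset hdisj hA_amb _).symm
    _ ≤ ∫⁻ ω, ENNReal.ofReal (Real.exp (γ * X (T : ℝ) ω)) ∂P := setLIntegral_le_lintegral _ _
    _ = 1 := lundG_rat hX hγ hT0

theorem lundberg_bound'
    (hX : LevyProcess P X) (hγpos : 0 < γ)
    (hγ : ∫ ω, Real.exp (γ * X 1 ω) ∂P = 1) :
    ∀ x : ℝ, 0 < x →
      Real.exp (γ * x) * (P {ω | ∃ t : ℝ, 0 ≤ t ∧ x < X t ω}).toReal ≤ 1 := by
  intro x hx
  classical
  -- a.e. reduction to rational times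
  have hAB : P {ω | ∃ t : ℝ, 0 ≤ t ∧ x < X t ω}
      ≤ P {ω | ∃ q : ℚ, 0 ≤ q ∧ x < X (q : ℝ) ω} := by
    refine measure_mono_ae ?_
    filter_upwards [hX.rightCont] with ω hc
    intro hA
    rcases hA with ⟨t, ht, hxt⟩
    have h1 : ∀ᶠ s in nhdsWithin t (Set.Ici t), x < X s ω :=
      (hc t ht).eventually (eventually_gt_nhds hxt)
    rw [eventually_nhdsWithin_iff] at h1
    rcases Metric.eventually_nhds_iff.mp h1 with ⟨δ, hδ, hU⟩
    rcases exists_rat_btwn (lt_add_of_pos_right t hδ) with ⟨q, hq1, hq2⟩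
    have hq0 : (0:ℚ) ≤ q := by
      have : (0:ℝ) ≤ (q:ℝ) := ht.trans hq1.le
      exact_mod_cast this
    refine ⟨q, hq0, ?_⟩
    refine hU ?_ hq1.le
    rw [Real.dist_eq, abs_sub_lt_iff]
    constructor <;> linarith
  -- countable union structure
  let e : ℕ ≃ ℚ := (Denumerable.eqv ℚ).symm
  let Fn : ℕ → Finset ℚ := fun n => (Finset.range n).image e |>.filter (fun q => 0 ≤ q)
  let C : ℕ → Set Ω := fun n => {ω | ∃ q : ℚ, q ∈ Fn n ∧ x < X (q : ℝ) ω}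
  have hFnmono : ∀ m n, m ≤ n → Fn m ⊆ Fn n := by
    intro m n hmn
    exact Finset.filter_subset_filter _ (Finset.image_subset_image (Finset.range_subset_range.mpr hmn))
  have hCmono : Monotone C := by
    intro m n hmn ω hω
    rcases hω with ⟨q, hq, hxq⟩
    exact ⟨q, hFnmono m n hmn hq, hxq⟩
  have hBC : {ω | ∃ q : ℚ, 0 ≤ q ∧ x < X (q : ℝ) ω} = ⋃ n, C n := by
    ext ω
    constructor
    · rintro ⟨q, hq0, hxq⟩
      refine Set.mem_iUnion.mpr ⟨e.symm q + 1, q, ?_, hxq⟩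
      refine Finset.mem_filter.mpr ⟨?_, hq0⟩
      refine Finset.mem_image.mpr ⟨e.symm q, ?_, by simp⟩
      exact Finset.mem_range.mpr (Nat.lt_succ_self _)
    · rintro hω
      rcases Set.mem_iUnion.mp hω with ⟨n, q, hq, hxq⟩
      exact ⟨q, (Finset.mem_filter.mp hq).2, hxq⟩
  have hC : ∀ n, ENNReal.ofReal (Real.exp (γ * x)) * P (C n) ≤ 1 := fun n =>
    finKey hX hγpos hγ (Fn n) (fun q hq => (Finset.mem_filter.mp hq).2)
  have hUnion : P (⋃ n, C n) = ⨆ n, P (C n) :=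
    Directed.measure_iUnion hCmono.directed_le
  have key : ENNReal.ofReal (Real.exp (γ * x)) * P {ω | ∃ t : ℝ, 0 ≤ t ∧ x < X t ω} ≤ 1 := by
    calc ENNReal.ofReal (Real.exp (γ * x)) * P {ω | ∃ t : ℝ, 0 ≤ t ∧ x < X t ω}
        ≤ ENNReal.ofReal (Real.exp (γ * x)) * P {ω | ∃ q : ℚ, 0 ≤ q ∧ x < X (q : ℝ) ω} :=
          mul_le_mul_right hAB _
      _ = ENNReal.ofReal (Real.exp (γ * x)) * ⨆ n, P (C n) := by rw [hBC, hUnion]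
      _ = ⨆ n, ENNReal.ofReal (Real.exp (γ * x)) * P (C n) := ENNReal.mul_iSup _ _
      _ ≤ 1 := iSup_le hC
  have hfin : ENNReal.ofReal (Real.exp (γ * x)) * P {ω | ∃ t : ℝ, 0 ≤ t ∧ x < X t ω} ≠ ⊤ :=
    (key.trans_lt ENNReal.one_lt_top).ne
  have := ENNReal.toReal_mono ENNReal.one_ne_top key
  rw [ENNReal.toReal_mul, ENNReal.toReal_ofReal (Real.exp_nonneg _), ENNReal.toReal_one] at this
  exact this

end LundbergAux

/-- Lundberg bound: if `E[e^{γ X₁}] = 1` with `γ > 0`, then for every `x > 0`,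
`e^{γ x} P(τ(x) < ∞) ≤ 1`, where `{τ(x) < ∞} = {∃ t ≥ 0, X_t > x}`. -/
theorem lundberg_bound
    {Ω : Type*} [MeasurableSpace Ω] (P : Measure Ω) [IsProbabilityMeasure P]
    (X : ℝ → Ω → ℝ) (hX : LevyProcess P X)
    (γ : ℝ) (hγpos : 0 < γ)
    (hγ : ∫ ω, Real.exp (γ * X 1 ω) ∂P = 1) :
    ∀ x : ℝ, 0 < x →
      Real.exp (γ * x) * (P {ω | ∃ t : ℝ, 0 ≤ t ∧ x < X t ω}).toReal ≤ 1 := by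
  exact lundberg_bound' hX hγpos hγ
end

section
/- Let X be a Lévy process and let γ>0 satisfy E[e^{γ X_1}]=1. Then for all t>0 and x>0, e^{γ x} P(t < τ(x) < ∞) ≤ E[ e^{γ X_t} 1_{X_t ≤ x} ]. -/
open MeasureTheory ProbabilityTheory Filter Set

open scoped ENNReal
set_option linter.unusedSectionVars false

namespace RuinAux

variable {Ω : Type*} [MeasurableSpace Ω] {P : Measure Ω} [IsProbabilityMeasure P]
  {X : ℝ → Ω → ℝ} {γ : ℝ}

/-- The ℝ≥0∞-valued mgf at time u. -/
noncomputable def Mgf (P : Measure Ω) (X : ℝ → Ω → ℝ) (γ u : ℝ) : ℝ≥0∞ :=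
  ∫⁻ ω, ENNReal.ofReal (Real.exp (γ * X u ω)) ∂P

/-- The filtration. -/
def Ft (X : ℝ → Ω → ℝ) (r : ℝ) : MeasurableSpace Ω :=
  ⨆ u ∈ Set.Icc (0:ℝ) r, MeasurableSpace.comap (X u) inferInstance

lemma Ft_le (hX : LevyProcess P X) (r : ℝ) : Ft X r ≤ ‹MeasurableSpace Ω› :=
  iSup₂_le fun u _ => MeasurableSpace.comap_le_iff_le_map.2 (hX.meas u).le_map

lemma measurable_Ft_X {r u : ℝ} (hu : u ∈ Set.Icc (0:ℝ) r) :
    Measurable[Ft X r] (X u) := by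
  refine measurable_iff_comap_le.2 ?_
  exact le_iSup₂ (f := fun u (_ : u ∈ Set.Icc (0:ℝ) r) =>
    MeasurableSpace.comap (X u) inferInstance) u hu

lemma Ft_mono {r s : ℝ} (h : r ≤ s) : Ft X r ≤ Ft X s :=
  iSup₂_le fun u hu => le_iSup₂ (f := fun u (_ : u ∈ Set.Icc (0:ℝ) s) =>
    MeasurableSpace.comap (X u) inferInstance) u ⟨hu.1, hu.2.trans h⟩


lemma measurable_integrand (hX : LevyProcess P X) (γ u : ℝ) :
    Measurable fun ω => ENNReal.ofReal (Real.exp (γ * X u ω)) :=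
  (ENNReal.measurable_ofReal.comp (Real.measurable_exp.comp
    ((measurable_const.mul measurable_id).comp (hX.meas u))))

/-- Key independence computation: multiplying by the future increment factor. -/
lemma key_step (hX : LevyProcess P X) {r s : ℝ} (hr : 0 ≤ r) (hrs : r ≤ s)
    {C : Set Ω} (hC : MeasurableSet[Ft X r] C) :
    ∫⁻ ω in C, ENNReal.ofReal (Real.exp (γ * X s ω)) ∂P =
      (∫⁻ ω in C, ENNReal.ofReal (Real.exp (γ * X r ω)) ∂P) * Mgf P X γ (s - r) := by
  have hCm : MeasurableSet C := Ft_le hX r _ hC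
  set F : Ω → ℝ≥0∞ := fun ω =>
    C.indicator (fun _ => (1:ℝ≥0∞)) ω * ENNReal.ofReal (Real.exp (γ * X r ω)) with hF
  set G : Ω → ℝ≥0∞ := fun ω => ENNReal.ofReal (Real.exp (γ * (X s ω - X r ω))) with hG
  have hFmeas' : Measurable[Ft X r] F := by
    refine Measurable.mul ?_ ?_
    · exact measurable_const.indicator hC
    · exact ENNReal.measurable_ofReal.comp (Real.measurable_exp.comp
        ((measurable_const.mul measurable_id).comp (measurable_Ft_X ⟨hr, le_rfl⟩)))
  have hinc : Measurable fun ω => X s ω - X r ω := (hX.meas s).sub (hX.meas r)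
  have hGmeas' : Measurable[MeasurableSpace.comap (fun ω => X s ω - X r ω) inferInstance] G := by
    refine ENNReal.measurable_ofReal.comp (Real.measurable_exp.comp
      ((measurable_const.mul measurable_id).comp ?_))
    exact Measurable.of_comap_le le_rfl
  have hFmeas : Measurable F := hFmeas'.mono (Ft_le hX r) le_rfl
  have hGmeas : Measurable G := hGmeas'.mono
    (MeasurableSpace.comap_le_iff_le_map.2 hinc.le_map) le_rfl
  have hindep : IndepFun F G P := by
    have h := hX.indep r s hr hrs
    exact indep_of_indep_of_le_right
      (indep_of_indep_of_le_left h (measurable_iff_comap_le.1 hFmeas'))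
      (measurable_iff_comap_le.1 hGmeas')
  have hprod : ∫⁻ ω, F ω * G ω ∂P = (∫⁻ ω, F ω ∂P) * ∫⁻ ω, G ω ∂P :=
    lintegral_mul_eq_lintegral_mul_lintegral_of_indepFun'' hFmeas.aemeasurable
      hGmeas.aemeasurable hindep
  have hFG : ∀ ω, F ω * G ω =
      C.indicator (fun _ => (1:ℝ≥0∞)) ω * ENNReal.ofReal (Real.exp (γ * X s ω)) := by
    intro ω
    show C.indicator (fun _ => (1:ℝ≥0∞)) ω * ENNReal.ofReal (Real.exp (γ * X r ω)) *
      ENNReal.ofReal (Real.exp (γ * (X s ω - X r ω))) = _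
    rw [mul_assoc, ← ENNReal.ofReal_mul (Real.exp_nonneg _), ← Real.exp_add]
    congr 3
    ring
  have hind : ∀ (u : ℝ) (ω : Ω), C.indicator (fun _ => (1:ℝ≥0∞)) ω *
      ENNReal.ofReal (Real.exp (γ * X u ω)) =
      C.indicator (fun ω => ENNReal.ofReal (Real.exp (γ * X u ω))) ω := by
    intro u ω
    by_cases h : ω ∈ C <;> simp [Set.indicator_of_mem, Set.indicator_of_notMem, h]
  have hG_int : ∫⁻ ω, G ω ∂P = Mgf P X γ (s - r) := by
    rw [hG]
    have h1 : ∫⁻ ω, ENNReal.ofReal (Real.exp (γ * (X s ω - X r ω))) ∂P =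
        ∫⁻ y, ENNReal.ofReal (Real.exp (γ * y)) ∂(Measure.map (fun ω => X s ω - X r ω) P) := by
      rw [lintegral_map (by fun_prop) hinc]
    rw [h1, hX.stat r s hr hrs, lintegral_map (by fun_prop) (hX.meas (s - r))]
    rfl
  calc ∫⁻ ω in C, ENNReal.ofReal (Real.exp (γ * X s ω)) ∂P
      = ∫⁻ ω, F ω * G ω ∂P := by
        simp_rw [hFG, hind]
        rw [lintegral_indicator hCm]
    _ = (∫⁻ ω, F ω ∂P) * ∫⁻ ω, G ω ∂P := hprod
    _ = (∫⁻ ω in C, ENNReal.ofReal (Real.exp (γ * X r ω)) ∂P) * Mgf P X γ (s - r) := by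
        rw [hG_int, hF]
        congr 1
        simp_rw [hind]
        rw [lintegral_indicator hCm]


lemma Mgf_add (hX : LevyProcess P X) {u v : ℝ} (hu : 0 ≤ u) (hv : 0 ≤ v) :
    Mgf P X γ (u + v) = Mgf P X γ u * Mgf P X γ v := by
  have h := key_step (γ := γ) hX hu (le_add_of_nonneg_right hv) (C := Set.univ)
    MeasurableSet.univ
  simp only [Measure.restrict_univ] at h
  have : u + v - u = v := by ring
  rw [this] at h
  exact h

lemma Mgf_zero (hX : LevyProcess P X) : Mgf P X γ 0 = 1 := by
  have h : (fun ω => ENNReal.ofReal (Real.exp (γ * X 0 ω))) =ᵐ[P] fun _ => 1 := by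
    filter_upwards [hX.init] with ω hω
    simp [hω]
  rw [Mgf, lintegral_congr_ae h, lintegral_one, measure_univ]

lemma Mgf_one (hX : LevyProcess P X) (hγ : ∫ ω, Real.exp (γ * X 1 ω) ∂P = 1) :
    Mgf P X γ 1 = 1 := by
  have h := integral_eq_lintegral_of_nonneg_ae (μ := P)
    (f := fun ω => Real.exp (γ * X 1 ω))
    (ae_of_all _ fun ω => (Real.exp_nonneg _))
    (Real.measurable_exp.comp ((hX.meas 1).const_mul γ)).aestronglyMeasurable
  rw [hγ] at h
  rw [show Mgf P X γ 1 = ∫⁻ ω, ENNReal.ofReal (Real.exp (γ * X 1 ω)) ∂P from rfl]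
  exact (ENNReal.toReal_eq_one_iff _).1 h.symm

lemma Mgf_nsmul (hX : LevyProcess P X) {c : ℝ} (hc : 0 ≤ c) :
    ∀ k : ℕ, Mgf P X γ (k * c) = (Mgf P X γ c) ^ k := by
  intro k
  induction k with
  | zero => simpa using Mgf_zero hX
  | succ n ih =>
    have : ((n+1 : ℕ) : ℝ) * c = (n : ℕ) * c + c := by push_cast; ring
    rw [this, Mgf_add hX (by positivity) hc, ih, pow_succ]

lemma Mgf_rat (hX : LevyProcess P X) (hγ : ∫ ω, Real.exp (γ * X 1 ω) ∂P = 1)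
    {q : ℚ} (hq : 0 ≤ q) : Mgf P X γ (q : ℝ) = 1 := by
  set n := q.den with hn
  have hden : (0:ℝ) < (n:ℝ) := by exact_mod_cast q.pos
  have hcpos : (0:ℝ) ≤ 1 / (n:ℝ) := by positivity
  have hunit : Mgf P X γ (1 / (n:ℝ)) = 1 := by
    have h1 : ((n : ℕ) : ℝ) * (1 / (n:ℝ)) = 1 := by field_simp
    have h2 := Mgf_nsmul (γ := γ) hX hcpos n
    rw [h1, Mgf_one hX hγ] at h2
    -- h2 : 1 = (Mgf …) ^ n
    rcases lt_trichotomy (Mgf P X γ (1 / (n:ℝ))) 1 with hlt | heq | hgt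
    · exact absurd h2.symm (pow_lt_one₀ zero_le hlt q.pos.ne').ne
    · exact heq
    · exact absurd h2.symm (one_lt_pow₀ hgt q.pos.ne').ne'
  have hnum : (0 : ℤ) ≤ q.num := Rat.num_nonneg.2 hq
  have hrepr : (q : ℝ) = (q.num.toNat : ℕ) * (1 / (n:ℝ)) := by
    have hcast : ((q.num.toNat : ℕ) : ℝ) = (q.num : ℝ) := by
      exact_mod_cast congrArg (fun z : ℤ => (z : ℝ)) (Int.toNat_of_nonneg hnum)
    rw [hcast, Rat.cast_def]
    rw [hn]
    ring
  rw [hrepr, Mgf_nsmul hX hcpos, hunit, one_pow]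


lemma Mgf_le_one (hX : LevyProcess P X) (hγ : ∫ ω, Real.exp (γ * X 1 ω) ∂P = 1)
    {u : ℝ} (hu : 0 ≤ u) : Mgf P X γ u ≤ 1 := by
  -- pick rationals q n with u < q n < u + 1/(n+1)
  have hex : ∀ n : ℕ, ∃ q : ℚ, u < (q:ℝ) ∧ (q:ℝ) < u + 1/(n+1) := by
    intro n
    obtain ⟨q, hq1, hq2⟩ := exists_rat_btwn (lt_add_of_pos_right u (by positivity : (0:ℝ) < 1/(n+1)))
    exact ⟨q, hq1, hq2⟩
  choose q hq1 hq2 using hex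
  have hqlim : Tendsto (fun n => ((q n : ℝ))) atTop (nhds u) := by
    have h1 : Tendsto (fun n : ℕ => u + 1/((n:ℝ)+1)) atTop (nhds (u + 0)) :=
      tendsto_const_nhds.add (tendsto_one_div_add_atTop_nhds_zero_nat)
    rw [add_zero] at h1
    exact tendsto_of_tendsto_of_tendsto_of_le_of_le tendsto_const_nhds h1
      (fun n => (hq1 n).le) (fun n => (hq2 n).le)
  have hmem : ∀ᶠ n in atTop, ((q n : ℝ)) ∈ Set.Ici u := Filter.Eventually.of_forall fun n => (hq1 n).le
  have hq0 : ∀ n, (0:ℚ) ≤ q n := fun n => by exact_mod_cast (hu.trans (hq1 n).le)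
  have hae : ∀ᵐ ω ∂P, Tendsto (fun n => ENNReal.ofReal (Real.exp (γ * X (q n) ω)))
      atTop (nhds (ENNReal.ofReal (Real.exp (γ * X u ω)))) := by
    filter_upwards [hX.rightCont] with ω hω
    have hc := hω u hu
    have ht : Tendsto (fun n => X (q n) ω) atTop (nhds (X u ω)) :=
      hc.tendsto.comp (tendsto_nhdsWithin_of_tendsto_nhds_of_eventually_within _ hqlim hmem)
    exact (ENNReal.continuous_ofReal.tendsto _).comp
      ((Real.continuous_exp.tendsto _).comp (ht.const_mul γ))
  have hliminf : Mgf P X γ u = ∫⁻ ω, Filter.liminf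
      (fun n => ENNReal.ofReal (Real.exp (γ * X (q n) ω))) atTop ∂P := by
    refine lintegral_congr_ae ?_
    filter_upwards [hae] with ω hω
    exact (hω.liminf_eq).symm
  rw [hliminf]
  calc ∫⁻ ω, Filter.liminf (fun n => ENNReal.ofReal (Real.exp (γ * X (q n) ω))) atTop ∂P
      ≤ Filter.liminf (fun n => ∫⁻ ω, ENNReal.ofReal (Real.exp (γ * X (q n) ω)) ∂P) atTop :=
        lintegral_liminf_le fun n => measurable_integrand hX γ _
    _ = 1 := by
        have : ∀ n, ∫⁻ ω, ENNReal.ofReal (Real.exp (γ * X (q n) ω)) ∂P = 1 := fun n =>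
          Mgf_rat hX hγ (hq0 n)
        simp only [this]
        exact liminf_const 1

lemma Mgf_eq_one (hX : LevyProcess P X) (hγ : ∫ ω, Real.exp (γ * X 1 ω) ∂P = 1)
    {u : ℝ} (hu : 0 ≤ u) : Mgf P X γ u = 1 := by
  set n : ℕ := ⌈u⌉₊
  have hun : u ≤ (n:ℝ) := Nat.le_ceil u
  have hmul : Mgf P X γ u * Mgf P X γ ((n:ℝ) - u) = 1 := by
    rw [← Mgf_add hX hu (by linarith)]
    have : u + ((n:ℝ) - u) = ((n:ℝ)) := by ring
    rw [this]
    have : ((n:ℝ)) = ((n : ℚ) : ℝ) := by push_cast; ring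
    rw [this]
    exact Mgf_rat hX hγ (by positivity)
  have h1 : Mgf P X γ u ≤ 1 := Mgf_le_one hX hγ hu
  have h2 : Mgf P X γ ((n:ℝ) - u) ≤ 1 := Mgf_le_one hX hγ (by linarith)
  refine le_antisymm h1 ?_
  calc (1:ℝ≥0∞) = Mgf P X γ u * Mgf P X γ ((n:ℝ) - u) := hmul.symm
    _ ≤ Mgf P X γ u * 1 := mul_le_mul_right h2 _
    _ = Mgf P X γ u := mul_one _


lemma doob_list (hX : LevyProcess P X) (hγpos : 0 < γ)
    (hγ : ∫ ω, Real.exp (γ * X 1 ω) ∂P = 1) (x : ℝ) :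
    ∀ l : List ℝ, l.Pairwise (· ≤ ·) → ∀ (r : ℝ) (C : Set Ω), 0 ≤ r → (∀ s ∈ l, r ≤ s) →
      MeasurableSet[Ft X r] C →
      ENNReal.ofReal (Real.exp (γ * x)) * P (C ∩ ⋃ s ∈ l, {ω | x < X s ω}) ≤
        ∫⁻ ω in C, ENNReal.ofReal (Real.exp (γ * X r ω)) ∂P := by
  intro l
  induction l with
  | nil =>
    intro _ r C hr _ hC
    simp
  | cons s l ih =>
    intro hsort r C hr hrl hC
    have hCm : MeasurableSet C := Ft_le hX r _ hC
    have hrs : r ≤ s := hrl s (List.mem_cons_self)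
    have hs0 : 0 ≤ s := hr.trans hrs
    have hsl : ∀ z ∈ l, s ≤ z := fun z hz => List.rel_of_pairwise_cons hsort hz
    have hsort' : l.Pairwise (· ≤ ·) := hsort.of_cons
    -- split the union
    have hXs : Measurable (X s) := hX.meas s
    have hgt : MeasurableSet {ω | x < X s ω} := measurableSet_lt measurable_const hXs
    have hle : MeasurableSet {ω | X s ω ≤ x} := measurableSet_le hXs measurable_const
    set A := C ∩ {ω | x < X s ω} with hA
    set B := (C ∩ {ω | X s ω ≤ x}) ∩ ⋃ z ∈ l, {ω | x < X z ω} with hB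
    have hsubset : C ∩ ⋃ z ∈ s :: l, {ω | x < X z ω} ⊆ A ∪ B := by
      rintro ω ⟨hωC, hωU⟩
      simp only [List.mem_cons, Set.mem_iUnion, Set.mem_setOf_eq] at hωU
      obtain ⟨z, hz, hxz⟩ := hωU
      by_cases hxs : x < X s ω
      · exact Or.inl ⟨hωC, hxs⟩
      · rcases hz with rfl | hz
        · exact absurd hxz hxs
        · exact Or.inr ⟨⟨hωC, not_lt.1 hxs⟩, Set.mem_iUnion₂.2 ⟨z, hz, hxz⟩⟩
    -- bound term A
    have hAbound : ENNReal.ofReal (Real.exp (γ * x)) * P A ≤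
        ∫⁻ ω in A, ENNReal.ofReal (Real.exp (γ * X s ω)) ∂P := by
      have : ∀ ω ∈ A, ENNReal.ofReal (Real.exp (γ * x)) ≤
          ENNReal.ofReal (Real.exp (γ * X s ω)) := by
        intro ω hω
        exact ENNReal.ofReal_le_ofReal (Real.exp_le_exp.2
          (mul_le_mul_of_nonneg_left hω.2.le hγpos.le))
      calc ENNReal.ofReal (Real.exp (γ * x)) * P A
          = ∫⁻ _ in A, ENNReal.ofReal (Real.exp (γ * x)) ∂P := by
            rw [setLIntegral_const]
        _ ≤ ∫⁻ ω in A, ENNReal.ofReal (Real.exp (γ * X s ω)) ∂P :=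
            setLIntegral_mono_ae ((measurable_integrand hX γ s).aemeasurable)
              (ae_of_all _ fun ω hω => this ω hω)
    -- bound term B by induction hypothesis at time s
    have hCB : MeasurableSet[Ft X s] (C ∩ {ω | X s ω ≤ x}) := by
      refine MeasurableSet.inter ?_ ?_
      · exact Ft_mono hrs _ hC
      · exact measurableSet_le (measurable_Ft_X ⟨hs0, le_rfl⟩) measurable_const
    have hBbound : ENNReal.ofReal (Real.exp (γ * x)) * P B ≤
        ∫⁻ ω in C ∩ {ω | X s ω ≤ x}, ENNReal.ofReal (Real.exp (γ * X s ω)) ∂P :=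
      ih hsort' s (C ∩ {ω | X s ω ≤ x}) hs0 hsl hCB
    -- recombine
    have hsplit : (∫⁻ ω in A, ENNReal.ofReal (Real.exp (γ * X s ω)) ∂P) +
        (∫⁻ ω in C ∩ {ω | X s ω ≤ x}, ENNReal.ofReal (Real.exp (γ * X s ω)) ∂P) =
        ∫⁻ ω in C, ENNReal.ofReal (Real.exp (γ * X s ω)) ∂P := by
      have hdisj : Disjoint A (C ∩ {ω | X s ω ≤ x}) := by
        rw [hA]
        refine Set.disjoint_left.2 ?_
        rintro ω ⟨_, h1⟩ ⟨_, h2⟩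
        simp only [Set.mem_setOf_eq] at h1 h2
        exact absurd h1 (not_lt.2 h2)
      have hU : A ∪ (C ∩ {ω | X s ω ≤ x}) = C := by
        rw [hA]
        ext ω
        constructor
        · rintro (⟨h1, _⟩ | ⟨h1, _⟩) <;> exact h1
        · intro hω
          by_cases hxs : x < X s ω
          · exact Or.inl ⟨hω, hxs⟩
          · exact Or.inr ⟨hω, not_lt.1 hxs⟩
      rw [← lintegral_union (hCm.inter hle) hdisj, hU]
    have hfinal : ∫⁻ ω in C, ENNReal.ofReal (Real.exp (γ * X s ω)) ∂P =
        ∫⁻ ω in C, ENNReal.ofReal (Real.exp (γ * X r ω)) ∂P := by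
      rw [key_step hX hr hrs hC, Mgf_eq_one hX hγ (by linarith), mul_one]
    calc ENNReal.ofReal (Real.exp (γ * x)) * P (C ∩ ⋃ z ∈ s :: l, {ω | x < X z ω})
        ≤ ENNReal.ofReal (Real.exp (γ * x)) * (P A + P B) :=
          mul_le_mul_right ((measure_mono hsubset).trans (measure_union_le A B)) _
      _ = ENNReal.ofReal (Real.exp (γ * x)) * P A +
          ENNReal.ofReal (Real.exp (γ * x)) * P B := by rw [mul_add]
      _ ≤ (∫⁻ ω in A, ENNReal.ofReal (Real.exp (γ * X s ω)) ∂P) +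
          (∫⁻ ω in C ∩ {ω | X s ω ≤ x}, ENNReal.ofReal (Real.exp (γ * X s ω)) ∂P) :=
          add_le_add hAbound hBbound
      _ = ∫⁻ ω in C, ENNReal.ofReal (Real.exp (γ * X s ω)) ∂P := hsplit
      _ = ∫⁻ ω in C, ENNReal.ofReal (Real.exp (γ * X r ω)) ∂P := hfinal

end RuinAux

open RuinAux

/-- If `E[e^{γ X₁}] = 1` with `γ > 0`, then for all `t, x > 0`,
`e^{γ x} P(t < τ(x) < ∞) ≤ E[e^{γ X_t} 1_{X_t ≤ x}]`.
Here `{t < τ(x) < ∞} = {∀ s ∈ [0,t], X_s ≤ x} ∩ {∃ s ≥ 0, X_s > x}`,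
using `{τ(x) ≤ t} = {sup_{s ≤ t} X_s > x}`. -/
theorem ruin_after_t_bound
    {Ω : Type*} [MeasurableSpace Ω] (P : Measure Ω) [IsProbabilityMeasure P]
    (X : ℝ → Ω → ℝ) (hX : LevyProcess P X)
    (γ : ℝ) (hγpos : 0 < γ)
    (hγ : ∫ ω, Real.exp (γ * X 1 ω) ∂P = 1) :
    ∀ t x : ℝ, 0 < t → 0 < x →
      Real.exp (γ * x) *
        (P {ω | (∀ s : ℝ, 0 ≤ s → s ≤ t → X s ω ≤ x) ∧ ∃ s : ℝ, 0 ≤ s ∧ x < X s ω}).toReal ≤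
      ∫ ω in {ω | X t ω ≤ x}, Real.exp (γ * X t ω) ∂P := by
  intro t x ht hx
  set c : ℝ≥0∞ := ENNReal.ofReal (Real.exp (γ * x)) with hc
  set T : Set Ω := {ω | X t ω ≤ x} with hTdef
  have hT : MeasurableSet T := measurableSet_le (hX.meas t) measurable_const
  set I : ℝ≥0∞ := ∫⁻ ω in T, ENNReal.ofReal (Real.exp (γ * X t ω)) ∂P with hI
  set B : Set Ω :=
    {ω | (∀ s : ℝ, 0 ≤ s → s ≤ t → X s ω ≤ x) ∧ ∃ s : ℝ, 0 ≤ s ∧ x < X s ω} with hBdef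
  obtain ⟨e, he⟩ := exists_surjective_nat ℚ
  set D : ℕ → Set Ω := fun n =>
    if t < ((e n : ℝ)) then T ∩ {ω | x < X (e n) ω} else ∅ with hD
  -- a.e. inclusion of B in the countable union
  have hsub : ∀ᵐ ω ∂P, ω ∈ B → ω ∈ ⋃ n, D n := by
    filter_upwards [hX.rightCont] with ω hω hmem
    obtain ⟨h1, s, hs0, hxs⟩ := hmem
    have hts : t < s := by
      by_contra hcon
      exact absurd (h1 s hs0 (not_lt.1 hcon)) (not_le.2 hxs)
    have hcont := hω s hs0
    have hev : (fun u => X u ω) ⁻¹' (Set.Ioi x) ∈ nhdsWithin s (Set.Ici s) :=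
      hcont (Ioi_mem_nhds hxs)
    obtain ⟨ε, hε, hball⟩ := Metric.mem_nhdsWithin_iff.1 hev
    obtain ⟨q, hq1, hq2⟩ := exists_rat_btwn (lt_add_of_pos_right s hε)
    have hqball : (q : ℝ) ∈ Metric.ball s ε ∩ Set.Ici s := by
      constructor
      · rw [Metric.mem_ball, Real.dist_eq, abs_of_pos (by linarith)]
        linarith
      · exact le_of_lt hq1
    have hxq : x < X q ω := hball hqball
    obtain ⟨n, hn⟩ := he q
    refine Set.mem_iUnion.2 ⟨n, ?_⟩
    rw [hD]
    simp only [hn]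
    rw [if_pos (by linarith : t < (q:ℝ))]
    exact ⟨h1 t ht.le le_rfl, hxq⟩
  -- the finite-grid bound
  have hbound : ∀ n, c * P (Set.accumulate D n) ≤ I := by
    intro n
    set Fq : Finset ℚ :=
      ((Finset.range (n+1)).image e).filter (fun q => t < (q:ℝ)) with hFq
    set l : List ℝ := (Fq.sort (· ≤ ·)).map (fun q : ℚ => (q : ℝ)) with hl
    have hsort : l.Pairwise (· ≤ ·) := by
      refine List.Pairwise.map _ (fun a b hab => ?_) (Fq.pairwise_sort (· ≤ ·))
      exact_mod_cast hab
    have hge : ∀ z ∈ l, t ≤ z := by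
      intro z hz
      rw [hl] at hz
      obtain ⟨q, hq, rfl⟩ := List.mem_map.1 hz
      have := (Finset.mem_filter.1 ((Finset.mem_sort (α := ℚ) (· ≤ ·)).1 hq)).2
      exact this.le
    have hTFt : MeasurableSet[Ft X t] T :=
      measurableSet_le (measurable_Ft_X ⟨ht.le, le_rfl⟩) measurable_const
    have hdoob := doob_list hX hγpos hγ x l hsort t T ht.le hge hTFt
    have hsubn : Set.accumulate D n ⊆ T ∩ ⋃ z ∈ l, {ω | x < X z ω} := by
      intro ω hω
      obtain ⟨i, hi, hωi⟩ := Set.mem_accumulate.1 hω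
      rw [hD] at hωi
      simp only at hωi
      by_cases hti : t < ((e i : ℝ))
      · rw [if_pos hti] at hωi
        obtain ⟨hωT, hωx⟩ := hωi
        refine ⟨hωT, ?_⟩
        have hq : e i ∈ Fq := by
          rw [hFq]
          exact Finset.mem_filter.2 ⟨Finset.mem_image.2 ⟨i,
            Finset.mem_range.2 (Nat.lt_succ_of_le hi), rfl⟩, hti⟩
        have hmem_l : ((e i : ℝ)) ∈ l := by
          rw [hl]
          exact List.mem_map.2 ⟨e i, (Finset.mem_sort (α := ℚ) (· ≤ ·)).2 hq, rfl⟩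
        exact Set.mem_iUnion₂.2 ⟨(e i : ℝ), hmem_l, hωx⟩
      · rw [if_neg hti] at hωi
        exact absurd hωi (Set.notMem_empty ω)
    calc c * P (Set.accumulate D n) ≤ c * P (T ∩ ⋃ z ∈ l, {ω | x < X z ω}) :=
          mul_le_mul_right (measure_mono hsubn) _
      _ ≤ I := hdoob
  -- combine over n
  have hmain : c * P B ≤ I := by
    have h1 : P B ≤ P (⋃ n, D n) := measure_mono_ae (by filter_upwards [hsub] with ω h using h)
    have h2 : P (⋃ n, D n) = ⨆ n, P (Set.accumulate D n) :=
      measure_iUnion_eq_iSup_accumulate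
    calc c * P B ≤ c * ⨆ n, P (Set.accumulate D n) := by
          rw [← h2]; exact mul_le_mul_right h1 _
      _ = ⨆ n, c * P (Set.accumulate D n) := by rw [ENNReal.mul_iSup]
      _ ≤ I := iSup_le hbound
  have hI1 : I ≤ 1 := by
    calc I ≤ ∫⁻ ω, ENNReal.ofReal (Real.exp (γ * X t ω)) ∂P :=
          setLIntegral_le_lintegral _ _
      _ = 1 := Mgf_eq_one hX hγ ht.le
  have hItop : I ≠ ⊤ := (hI1.trans_lt ENNReal.one_lt_top).ne
  have hRHS : ∫ ω in T, Real.exp (γ * X t ω) ∂P = I.toReal := by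
    rw [hI]
    exact integral_eq_lintegral_of_nonneg_ae (ae_of_all _ fun ω => Real.exp_nonneg _)
      ((Real.measurable_exp.comp ((hX.meas t).const_mul γ)).aestronglyMeasurable)
  rw [hRHS]
  have hLHS : Real.exp (γ * x) * (P B).toReal = (c * P B).toReal := by
    rw [ENNReal.toReal_mul, hc, ENNReal.toReal_ofReal (Real.exp_nonneg _)]
  rw [hLHS]
  exact ENNReal.toReal_mono hItop hmain
end

section
/- Let X be a Lévy process, let γ>0 satisfy E[e^{γ X_1}]=1, and suppose ψ'(γ) := E[X_1 e^{γ X_1}] is finite and positive. Fix v with 0<v<ψ'(γ). Then for all sequences t_n→∞ and x_n with (x_n−v t_n)/t_n^{1/2}→0, one has e^{γ x_n} P( t_n < τ(x_n) < ∞ ) → 0. -/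
open MeasureTheory ProbabilityTheory Filter Set

open scoped ENNReal NNReal

namespace RuinProof

variable {Ω : Type*} [MeasurableSpace Ω] {P : Measure Ω} [IsProbabilityMeasure P]
  {X : ℝ → Ω → ℝ} {γ : ℝ}

/-- The natural filtration of `X` at time `s`. -/
def Fs (X : ℝ → Ω → ℝ) (s : ℝ) : MeasurableSpace Ω :=
  ⨆ u ∈ Set.Icc (0:ℝ) s, MeasurableSpace.comap (X u) inferInstance

lemma measFs {s u : ℝ} (h0 : 0 ≤ u) (hus : u ≤ s) : Measurable[Fs X s] (X u) := by
  apply Measurable.of_comap_le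
  exact le_biSup (fun u => MeasurableSpace.comap (X u) inferInstance) ⟨h0, hus⟩

lemma indepFun_incr (hX : LevyProcess P X) {s t : ℝ} (hs : 0 ≤ s) (hst : s ≤ t)
    {E : Type*} [MeasurableSpace E] {W : Ω → E} (hW : Measurable[Fs X s] W) :
    IndepFun W (fun ω => X t ω - X s ω) P := by
  have h := hX.indep s t hs hst
  exact indep_of_indep_of_le_left h hW.comap_le

lemma incr_integrable_iff (hX : LevyProcess P X) {s t : ℝ} (hs : 0 ≤ s) (hst : s ≤ t)
    {g : ℝ → ℝ} (hg : Measurable g) :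
    Integrable (fun ω => g (X t ω - X s ω)) P ↔ Integrable (fun ω => g (X (t - s) ω)) P := by
  have hΔ : Measurable (fun ω => X t ω - X s ω) := (hX.meas t).sub (hX.meas s)
  show Integrable (g ∘ (fun ω => X t ω - X s ω)) P ↔ Integrable (g ∘ (X (t - s))) P
  rw [← integrable_map_measure hg.aestronglyMeasurable hΔ.aemeasurable,
    hX.stat s t hs hst,
    integrable_map_measure hg.aestronglyMeasurable (hX.meas _).aemeasurable]

lemma incr_integral_eq (hX : LevyProcess P X) {s t : ℝ} (hs : 0 ≤ s) (hst : s ≤ t)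
    {g : ℝ → ℝ} (hg : Measurable g) :
    ∫ ω, g (X t ω - X s ω) ∂P = ∫ ω, g (X (t - s) ω) ∂P := by
  have hΔ : Measurable (fun ω => X t ω - X s ω) := (hX.meas t).sub (hX.meas s)
  rw [← integral_map hΔ.aemeasurable hg.aestronglyMeasurable,
    hX.stat s t hs hst,
    integral_map (hX.meas _).aemeasurable hg.aestronglyMeasurable]

/-- exponential moment as a lower integral -/
noncomputable def lap (P : Measure Ω) (X : ℝ → Ω → ℝ) (γ : ℝ) (t : ℝ) : ℝ≥0∞ :=
  ∫⁻ ω, ENNReal.ofReal (Real.exp (γ * X t ω)) ∂P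

lemma measurable_expγ : Measurable (fun y : ℝ => ENNReal.ofReal (Real.exp (γ * y))) :=
  ENNReal.measurable_ofReal.comp ((measurable_const.mul measurable_id).exp)

lemma lap_zero (hX : LevyProcess P X) : lap P X γ 0 = 1 := by
  have h : (fun ω => ENNReal.ofReal (Real.exp (γ * X 0 ω))) =ᵐ[P] (fun _ => 1) := by
    filter_upwards [hX.init] with ω hω
    simp [hω]
  rw [lap, lintegral_congr_ae h]
  simp

lemma lap_add (hX : LevyProcess P X) {s t : ℝ} (hs : 0 ≤ s) (ht : 0 ≤ t) :
    lap P X γ (s + t) = lap P X γ s * lap P X γ t := by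
  have hst : s ≤ s + t := le_add_of_nonneg_right ht
  have hind : IndepFun (fun ω => ENNReal.ofReal (Real.exp (γ * X s ω)))
      (fun ω => ENNReal.ofReal (Real.exp (γ * (X (s+t) ω - X s ω)))) P := by
    have h := indepFun_incr (W := X s) hX hs hst (measFs hs le_rfl)
    exact h.comp measurable_expγ measurable_expγ
  have hpt : ∀ ω, ENNReal.ofReal (Real.exp (γ * X (s+t) ω))
      = ENNReal.ofReal (Real.exp (γ * X s ω)) * ENNReal.ofReal (Real.exp (γ * (X (s+t) ω - X s ω))) := by
    intro ω
    rw [← ENNReal.ofReal_mul (Real.exp_nonneg _), ← Real.exp_add]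
    ring_nf
  have hmeas1 : Measurable (fun ω => ENNReal.ofReal (Real.exp (γ * X s ω))) :=
    measurable_expγ.comp (hX.meas s)
  have hmeas2 : Measurable (fun ω => ENNReal.ofReal (Real.exp (γ * (X (s+t) ω - X s ω)))) :=
    measurable_expγ.comp ((hX.meas (s+t)).sub (hX.meas s))
  calc lap P X γ (s + t)
      = ∫⁻ ω, ENNReal.ofReal (Real.exp (γ * X s ω)) * ENNReal.ofReal (Real.exp (γ * (X (s+t) ω - X s ω))) ∂P := by
        rw [lap]; exact lintegral_congr (fun ω => hpt ω)
    _ = (∫⁻ ω, ENNReal.ofReal (Real.exp (γ * X s ω)) ∂P) * ∫⁻ ω, ENNReal.ofReal (Real.exp (γ * (X (s+t) ω - X s ω))) ∂P :=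
        lintegral_mul_eq_lintegral_mul_lintegral_of_indepFun'' hmeas1.aemeasurable hmeas2.aemeasurable hind
    _ = lap P X γ s * lap P X γ t := by
        congr 1
        have hΔ : Measurable (fun ω => X (s+t) ω - X s ω) := (hX.meas (s+t)).sub (hX.meas s)
        rw [← lintegral_map measurable_expγ hΔ, hX.stat s (s+t) hs hst,
          lintegral_map measurable_expγ (hX.meas _)]
        simp [lap]

lemma lap_one (hX : LevyProcess P X) (hγ1 : ∫ ω, Real.exp (γ * X 1 ω) ∂P = 1) :
    lap P X γ 1 = 1 := by
  have hint : Integrable (fun ω => Real.exp (γ * X 1 ω)) P := by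
    by_contra h
    rw [integral_undef h] at hγ1
    exact one_ne_zero hγ1.symm
  rw [lap, ← ofReal_integral_eq_lintegral_ofReal hint (Eventually.of_forall fun ω => (Real.exp_nonneg _)), hγ1]
  simp

lemma lap_nat_mul (hX : LevyProcess P X) (n : ℕ) {u : ℝ} (hu : 0 ≤ u) :
    lap P X γ (n * u) = lap P X γ u ^ n := by
  induction n with
  | zero => simpa using lap_zero hX
  | succ n ih =>
    have : ((n+1 : ℕ) : ℝ) * u = (n : ℝ) * u + u := by push_cast; ring
    rw [this, lap_add hX (by positivity) hu, ih, pow_succ]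

lemma ennreal_pow_eq_one {a : ℝ≥0∞} {n : ℕ} (hn : n ≠ 0) (h : a ^ n = 1) : a = 1 := by
  rcases lt_trichotomy a 1 with hlt | heq | hgt
  · have := ENNReal.pow_lt_pow_left hn hlt (b := 1)
    rw [one_pow, h] at this
    exact absurd this (lt_irrefl _)
  · exact heq
  · have := ENNReal.pow_lt_pow_left hn hgt (a := 1)
    rw [one_pow, h] at this
    exact absurd this (lt_irrefl _)

lemma lap_rat (hX : LevyProcess P X) (hγ1 : ∫ ω, Real.exp (γ * X 1 ω) ∂P = 1)
    (q : ℚ) (hq : 0 ≤ q) : lap P X γ (q : ℝ) = 1 := by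
  have hd : (0:ℝ) < (q.den : ℝ) := by exact_mod_cast q.pos
  have hden : lap P X γ ((q.den : ℕ) * ((q.den : ℝ))⁻¹) = lap P X γ (((q.den:ℝ))⁻¹) ^ (q.den : ℕ) :=
    lap_nat_mul hX _ (by positivity)
  have hone : ((q.den : ℕ) : ℝ) * ((q.den : ℝ))⁻¹ = 1 := by
    field_simp
  rw [hone, lap_one hX hγ1] at hden
  have hbase : lap P X γ (((q.den:ℝ))⁻¹) = 1 :=
    ennreal_pow_eq_one q.den_nz hden.symm
  have hnum : (0:ℤ) ≤ q.num := Rat.num_nonneg.2 hq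
  have hcast : (q : ℝ) = (q.num.toNat : ℕ) * ((q.den : ℝ))⁻¹ := by
    rw [Rat.cast_def, div_eq_mul_inv]
    congr 1
    exact_mod_cast (Int.toNat_of_nonneg hnum).symm
  rw [hcast, lap_nat_mul hX _ (by positivity), hbase, one_pow]

lemma exp_integrable (hX : LevyProcess P X) (hγ1 : ∫ ω, Real.exp (γ * X 1 ω) ∂P = 1)
    {r : ℝ} (q : ℚ) (hq : 0 ≤ q) (hqr : (q : ℝ) = r) :
    Integrable (fun ω => Real.exp (γ * X r ω)) P := by
  subst hqr
  refine ⟨((measurable_const.mul (hX.meas _)).exp).aestronglyMeasurable, ?_⟩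
  rw [hasFiniteIntegral_iff_ofReal (Eventually.of_forall fun ω => Real.exp_nonneg _)]
  have := lap_rat hX hγ1 q hq
  rw [lap] at this
  rw [this]
  exact ENNReal.one_lt_top

lemma exp_integral (hX : LevyProcess P X) (hγ1 : ∫ ω, Real.exp (γ * X 1 ω) ∂P = 1)
    {r : ℝ} (q : ℚ) (hq : 0 ≤ q) (hqr : (q : ℝ) = r) :
    ∫ ω, Real.exp (γ * X r ω) ∂P = 1 := by
  subst hqr
  rw [integral_eq_lintegral_of_nonneg_ae (f := fun ω => Real.exp (γ * X (q:ℝ) ω)) (Eventually.of_forall fun ω => Real.exp_nonneg _)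
    ((measurable_const.mul (hX.meas _)).exp).aestronglyMeasurable]
  have := lap_rat hX hγ1 q hq
  rw [lap] at this
  rw [this]
  simp

set_option linter.unusedSectionVars false

lemma Fs_le (hX : LevyProcess P X) (s : ℝ) : Fs X s ≤ (inferInstance : MeasurableSpace Ω) := by
  apply iSup_le; intro u; apply iSup_le; intro _
  exact (hX.meas u).comap_le

/-- Factorization of an integral against an independent increment. -/
lemma factor_mul (hX : LevyProcess P X) {s t : ℝ} (hs : 0 ≤ s) (hst : s ≤ t)
    {W : Ω → ℝ} (hWmeas : Measurable[Fs X s] W) (hWint : Integrable W P)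
    {g : ℝ → ℝ} (hg : Measurable g)
    (hgint : Integrable (fun ω => g (X (t - s) ω)) P) :
    Integrable (fun ω => W ω * g (X t ω - X s ω)) P ∧
    ∫ ω, W ω * g (X t ω - X s ω) ∂P = (∫ ω, W ω ∂P) * ∫ ω, g (X (t - s) ω) ∂P := by
  have hI : IndepFun W (fun ω => g (X t ω - X s ω)) P := by
    have h := indepFun_incr hX hs hst hWmeas
    exact h.comp measurable_id hg
  have hgΔ : Integrable (fun ω => g (X t ω - X s ω)) P :=
    (incr_integrable_iff hX hs hst hg).2 hgint
  constructor
  · exact hI.integrable_mul hWint hgΔ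
  · have h := hI.integral_mul_eq_mul_integral hWint.1 hgΔ.1
    calc ∫ ω, W ω * g (X t ω - X s ω) ∂P
        = ∫ ω, (W * fun ω => g (X t ω - X s ω)) ω ∂P := by rfl
      _ = (∫ ω, W ω ∂P) * ∫ ω, g (X t ω - X s ω) ∂P := h
      _ = (∫ ω, W ω ∂P) * ∫ ω, g (X (t - s) ω) ∂P := by
            rw [incr_integral_eq hX hs hst hg]

/-- One-step martingale property: multiplying by the exponential of a later increment
does not change the expectation. -/
lemma martingale_shift (hX : LevyProcess P X) (hγ1 : ∫ ω, Real.exp (γ * X 1 ω) ∂P = 1)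
    {s t : ℝ} (hs : 0 ≤ s) (q : ℚ) (hq : 0 ≤ q) (hqts : (q : ℝ) = t - s)
    {W : Ω → ℝ} (hWmeas : Measurable[Fs X s] W)
    (hWint : Integrable (fun ω => W ω * Real.exp (γ * X s ω)) P) :
    ∫ ω, W ω * Real.exp (γ * X t ω) ∂P = ∫ ω, W ω * Real.exp (γ * X s ω) ∂P := by
  have hst : s ≤ t := by
    have : (0:ℝ) ≤ t - s := hqts ▸ (by exact_mod_cast hq)
    linarith
  have hW'meas : Measurable[Fs X s] (fun ω => W ω * Real.exp (γ * X s ω)) :=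
    hWmeas.mul ((measurable_const.mul (measFs hs le_rfl)).exp)
  have hgint : Integrable (fun ω => Real.exp (γ * X (t - s) ω)) P :=
    exp_integrable hX hγ1 q hq hqts
  obtain ⟨hint, heq⟩ := factor_mul hX hs hst hW'meas hWint
    (g := fun y => Real.exp (γ * y)) ((measurable_const.mul measurable_id).exp) hgint
  have hpt : ∀ ω, W ω * Real.exp (γ * X t ω)
      = (W ω * Real.exp (γ * X s ω)) * Real.exp (γ * (X t ω - X s ω)) := by
    intro ω
    rw [mul_assoc, ← Real.exp_add]
    ring_nf
  calc ∫ ω, W ω * Real.exp (γ * X t ω) ∂P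
      = ∫ ω, (W ω * Real.exp (γ * X s ω)) * Real.exp (γ * (X t ω - X s ω)) ∂P :=
        integral_congr_ae (Eventually.of_forall hpt)
    _ = (∫ ω, W ω * Real.exp (γ * X s ω) ∂P) * ∫ ω, Real.exp (γ * X (t - s) ω) ∂P := heq
    _ = ∫ ω, W ω * Real.exp (γ * X s ω) ∂P := by
        rw [exp_integral hX hγ1 q hq hqts, mul_one]

/-- increments over unit time intervals -/
def xi (X : ℝ → Ω → ℝ) (k : ℕ) : Ω → ℝ := fun ω => X ((k+1 : ℕ) : ℝ) ω - X ((k : ℕ) : ℝ) ω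

/-- the exponential martingale started at `X 0` -/
noncomputable def EN (X : ℝ → Ω → ℝ) (γ : ℝ) (N : ℕ) : Ω → ℝ :=
  fun ω => Real.exp (γ * (X ((N : ℕ) : ℝ) ω - X 0 ω))

lemma EN_meas_Fs (hX : LevyProcess P X) (N : ℕ) : Measurable[Fs X ((N:ℕ):ℝ)] (EN X γ N) :=
  (measurable_const.mul ((measFs (by positivity) le_rfl).sub
    (measFs le_rfl (by positivity)))).exp

lemma xi_meas (hX : LevyProcess P X) (k : ℕ) : Measurable (xi X k) :=
  (hX.meas _).sub (hX.meas _)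

lemma xi_meas_Fs (hX : LevyProcess P X) {k : ℕ} {s : ℝ} (hk : ((k+1:ℕ):ℝ) ≤ s) :
    Measurable[Fs X s] (xi X k) := by
  have h0 : ((k:ℕ):ℝ) ≤ s := le_trans (by push_cast; linarith) hk
  exact (measFs (by positivity) hk).sub (measFs (by positivity) h0)

lemma EN_integrable (hX : LevyProcess P X) (hγ1 : ∫ ω, Real.exp (γ * X 1 ω) ∂P = 1)
    (N : ℕ) : Integrable (EN X γ N) P := by
  have h := (incr_integrable_iff hX le_rfl (by positivity : (0:ℝ) ≤ ((N:ℕ):ℝ))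
    (g := fun y => Real.exp (γ * y)) ((measurable_const.mul measurable_id).exp))
  rw [sub_zero] at h
  exact h.2 (exp_integrable hX hγ1 (N : ℚ) (by positivity) (by push_cast; ring))

lemma EN_integral (hX : LevyProcess P X) (hγ1 : ∫ ω, Real.exp (γ * X 1 ω) ∂P = 1)
    (N : ℕ) : ∫ ω, EN X γ N ω ∂P = 1 := by
  have h := incr_integral_eq hX le_rfl (by positivity : (0:ℝ) ≤ ((N:ℕ):ℝ))
    (g := fun y => Real.exp (γ * y)) ((measurable_const.mul measurable_id).exp)
  rw [sub_zero] at h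
  calc ∫ ω, EN X γ N ω ∂P = ∫ ω, Real.exp (γ * X ((N:ℕ):ℝ) ω) ∂P := h
    _ = 1 := exp_integral hX hγ1 (N : ℚ) (by positivity) (by push_cast; ring)

lemma bdd_mul_EN (hX : LevyProcess P X) (hγ1 : ∫ ω, Real.exp (γ * X 1 ω) ∂P = 1)
    {N : ℕ} {W : Ω → ℝ} (hW : Measurable W) {C : ℝ} (hC : ∀ ω, |W ω| ≤ C) :
    Integrable (fun ω => W ω * EN X γ N ω) P :=
  (EN_integrable hX hγ1 N).bdd_mul hW.aestronglyMeasurable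
    (c := C) (Eventually.of_forall fun ω => by simpa [Real.norm_eq_abs] using hC ω)

lemma EN_succ (N : ℕ) (ω : Ω) :
    EN X γ (N+1) ω = EN X γ N ω * Real.exp (γ * xi X N ω) := by
  simp only [EN, xi, ← Real.exp_add]
  congr 1
  push_cast
  ring

/-- The key identity: integrating a function of a single unit increment against the
exponential martingale gives the tilted one-step expectation. -/
lemma xi_factor (hX : LevyProcess P X) (hγ1 : ∫ ω, Real.exp (γ * X 1 ω) ∂P = 1)
    {g : ℝ → ℝ} (hg : Measurable g)
    (hgi : Integrable (fun ω => g (X 1 ω) * Real.exp (γ * X 1 ω)) P)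
    {k N : ℕ} (hk : k < N) :
    Integrable (fun ω => g (xi X k ω) * EN X γ N ω) P ∧
    ∫ ω, g (xi X k ω) * EN X γ N ω ∂P = ∫ ω, g (X 1 ω) * Real.exp (γ * X 1 ω) ∂P := by
  have h0k : (0:ℝ) ≤ ((k:ℕ):ℝ) := by positivity
  have h0k1 : (0:ℝ) ≤ ((k+1:ℕ):ℝ) := by positivity
  have hkk1 : ((k:ℕ):ℝ) ≤ ((k+1:ℕ):ℝ) := by push_cast; linarith
  have hk1N : ((k+1:ℕ):ℝ) ≤ ((N:ℕ):ℝ) := by exact_mod_cast hk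
  have hts1 : ((k+1:ℕ):ℝ) - ((k:ℕ):ℝ) = 1 := by push_cast; ring
  -- step A : `EN k * (g(ξ k) e^{γ ξ k})`
  have hgmeas : Measurable (fun y => g y * Real.exp (γ * y)) :=
    hg.mul ((measurable_const.mul measurable_id).exp)
  have hgint1 : Integrable (fun ω => g (X (((k+1:ℕ):ℝ) - ((k:ℕ):ℝ)) ω)
      * Real.exp (γ * X (((k+1:ℕ):ℝ) - ((k:ℕ):ℝ)) ω)) P := by
    rw [hts1]; exact hgi
  obtain ⟨hAint, hAeq⟩ := factor_mul hX h0k hkk1 (W := EN X γ k) (EN_meas_Fs hX k)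
    (EN_integrable hX hγ1 k) hgmeas hgint1
  have hAeq' : ∫ ω, EN X γ k ω * (g (xi X k ω) * Real.exp (γ * xi X k ω)) ∂P
      = (∫ ω, EN X γ k ω ∂P) * ∫ ω, g (X (((k+1:ℕ):ℝ) - ((k:ℕ):ℝ)) ω)
          * Real.exp (γ * X (((k+1:ℕ):ℝ) - ((k:ℕ):ℝ)) ω) ∂P := hAeq
  -- step B : multiply by the remaining increment
  have hq : (0:ℚ) ≤ (N:ℚ) - ((k:ℚ)+1) := by
    have : (k:ℚ) + 1 ≤ (N:ℚ) := by exact_mod_cast hk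
    linarith
  have hqr : (((N:ℚ) - ((k:ℚ)+1) : ℚ) : ℝ) = ((N:ℕ):ℝ) - ((k+1:ℕ):ℝ) := by push_cast; ring
  have hBW : Measurable[Fs X ((k+1:ℕ):ℝ)]
      (fun ω => EN X γ k ω * (g (xi X k ω) * Real.exp (γ * xi X k ω))) := by
    have mE : Measurable[Fs X ((k+1:ℕ):ℝ)] (EN X γ k) :=
      (measurable_const.mul ((measFs h0k hkk1).sub (measFs le_rfl h0k1))).exp
    have mxi : Measurable[Fs X ((k+1:ℕ):ℝ)] (xi X k) := xi_meas_Fs hX le_rfl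
    exact mE.mul ((hg.comp mxi).mul ((measurable_const.mul mxi).exp))
  have hBint0 : Integrable (fun ω => EN X γ k ω * (g (xi X k ω) * Real.exp (γ * xi X k ω))) P := hAint
  have hexpint : Integrable (fun ω => Real.exp (γ * X (((N:ℕ):ℝ) - ((k+1:ℕ):ℝ)) ω)) P :=
    exp_integrable hX hγ1 _ hq hqr
  obtain ⟨hBint, hBeq⟩ := factor_mul hX h0k1 hk1N hBW hBint0
    (g := fun y => Real.exp (γ * y)) ((measurable_const.mul measurable_id).exp) hexpint
  have hpt : ∀ ω, g (xi X k ω) * EN X γ N ω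
      = (EN X γ k ω * (g (xi X k ω) * Real.exp (γ * xi X k ω)))
        * Real.exp (γ * (X ((N:ℕ):ℝ) ω - X ((k+1:ℕ):ℝ) ω)) := by
    intro ω
    simp only [EN, xi]
    rw [show γ * (X ((N:ℕ):ℝ) ω - X 0 ω)
        = γ * (X ((k:ℕ):ℝ) ω - X 0 ω) + γ * (X ((k+1:ℕ):ℝ) ω - X ((k:ℕ):ℝ) ω)
          + γ * (X ((N:ℕ):ℝ) ω - X ((k+1:ℕ):ℝ) ω) by ring,
      Real.exp_add, Real.exp_add]
    ring
  constructor
  · exact hBint.congr (Eventually.of_forall fun ω => (hpt ω).symm)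
  · calc ∫ ω, g (xi X k ω) * EN X γ N ω ∂P
        = ∫ ω, (EN X γ k ω * (g (xi X k ω) * Real.exp (γ * xi X k ω)))
            * Real.exp (γ * (X ((N:ℕ):ℝ) ω - X ((k+1:ℕ):ℝ) ω)) ∂P :=
          integral_congr_ae (Eventually.of_forall hpt)
      _ = (∫ ω, EN X γ k ω * (g (xi X k ω) * Real.exp (γ * xi X k ω)) ∂P)
            * ∫ ω, Real.exp (γ * X (((N:ℕ):ℝ) - ((k+1:ℕ):ℝ)) ω) ∂P := hBeq
      _ = ∫ ω, EN X γ k ω * (g (xi X k ω) * Real.exp (γ * xi X k ω)) ∂P := by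
          rw [exp_integral hX hγ1 _ hq hqr, mul_one]
      _ = (∫ ω, EN X γ k ω ∂P) * ∫ ω, g (X 1 ω) * Real.exp (γ * X 1 ω) ∂P := by
          rw [hAeq']
          congr 1
          rw [hts1]
      _ = ∫ ω, g (X 1 ω) * Real.exp (γ * X 1 ω) ∂P := by
          rw [EN_integral hX hγ1 k, one_mul]

lemma rho_sum (hX : LevyProcess P X) (hγ1 : ∫ ω, Real.exp (γ * X 1 ω) ∂P = 1)
    {ρ : ℝ → ℝ} (hρ : Measurable ρ)
    (hρi : Integrable (fun ω => ρ (X 1 ω) * Real.exp (γ * X 1 ω)) P) (N : ℕ) :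
    Integrable (fun ω => (∑ k ∈ Finset.range N, ρ (xi X k ω)) * EN X γ N ω) P ∧
    ∫ ω, (∑ k ∈ Finset.range N, ρ (xi X k ω)) * EN X γ N ω ∂P
      = N * ∫ ω, ρ (X 1 ω) * Real.exp (γ * X 1 ω) ∂P := by
  have hpt : ∀ ω, (∑ k ∈ Finset.range N, ρ (xi X k ω)) * EN X γ N ω
      = ∑ k ∈ Finset.range N, ρ (xi X k ω) * EN X γ N ω := fun ω => Finset.sum_mul ..
  have hterm : ∀ k ∈ Finset.range N,
      Integrable (fun ω => ρ (xi X k ω) * EN X γ N ω) P := by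
    intro k hk
    exact (xi_factor hX hγ1 hρ hρi (Finset.mem_range.1 hk)).1
  constructor
  · exact (integrable_finset_sum _ hterm).congr (Eventually.of_forall fun ω => (hpt ω).symm)
  · calc ∫ ω, (∑ k ∈ Finset.range N, ρ (xi X k ω)) * EN X γ N ω ∂P
        = ∫ ω, ∑ k ∈ Finset.range N, ρ (xi X k ω) * EN X γ N ω ∂P :=
          integral_congr_ae (Eventually.of_forall hpt)
      _ = ∑ k ∈ Finset.range N, ∫ ω, ρ (xi X k ω) * EN X γ N ω ∂P :=
          integral_finset_sum _ hterm
      _ = ∑ _k ∈ Finset.range N, ∫ ω, ρ (X 1 ω) * Real.exp (γ * X 1 ω) ∂P :=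
          Finset.sum_congr rfl fun k hk => (xi_factor hX hγ1 hρ hρi (Finset.mem_range.1 hk)).2
      _ = N * ∫ ω, ρ (X 1 ω) * Real.exp (γ * X 1 ω) ∂P := by
          rw [Finset.sum_const, Finset.card_range, nsmul_eq_mul]

lemma sum_centered (hX : LevyProcess P X) (hγ1 : ∫ ω, Real.exp (γ * X 1 ω) ∂P = 1)
    {d : ℝ → ℝ} (hd : Measurable d) {D : ℝ} (hD : ∀ y, |d y| ≤ D)
    (hd0 : ∫ ω, d (X 1 ω) * Real.exp (γ * X 1 ω) ∂P = 0) (N : ℕ) :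
    (∫ ω, (∑ k ∈ Finset.range N, d (xi X k ω)) * EN X γ N ω ∂P = 0) ∧
    (∫ ω, (∑ k ∈ Finset.range N, d (xi X k ω))^2 * EN X γ N ω ∂P
      ≤ N * ∫ ω, (d (X 1 ω))^2 * Real.exp (γ * X 1 ω) ∂P) := by
  have hexpmeas : Measurable (fun y : ℝ => Real.exp (γ * y)) :=
    (measurable_const.mul measurable_id).exp
  have hexpX1 : Integrable (fun ω => Real.exp (γ * X 1 ω)) P :=
    exp_integrable hX hγ1 1 (by norm_num) (by norm_num)
  induction N with
  | zero => simp
  | succ N IH =>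
    obtain ⟨IH1, IH2⟩ := IH
    have h0N : (0:ℝ) ≤ ((N:ℕ):ℝ) := by positivity
    have hNN1 : ((N:ℕ):ℝ) ≤ ((N+1:ℕ):ℝ) := by push_cast; linarith
    have hts1 : ((N+1:ℕ):ℝ) - ((N:ℕ):ℝ) = 1 := by push_cast; ring
    have hSmeas : Measurable (fun ω => ∑ k ∈ Finset.range N, d (xi X k ω)) :=
      Finset.measurable_sum _ (fun k _ => hd.comp (xi_meas hX k))
    have hSmeasFs : Measurable[Fs X ((N:ℕ):ℝ)] (fun ω => ∑ k ∈ Finset.range N, d (xi X k ω)) :=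
      Finset.measurable_sum _ (fun k hk => hd.comp (xi_meas_Fs hX
        (by exact_mod_cast Finset.mem_range.1 hk)))
    have hSbdd : ∀ ω, |∑ k ∈ Finset.range N, d (xi X k ω)| ≤ (N:ℝ) * D := by
      intro ω
      calc |∑ k ∈ Finset.range N, d (xi X k ω)| ≤ ∑ k ∈ Finset.range N, |d (xi X k ω)| :=
            Finset.abs_sum_le_sum_abs _ _
        _ ≤ ∑ _k ∈ Finset.range N, D := Finset.sum_le_sum (fun k _ => hD _)
        _ = (N:ℝ) * D := by rw [Finset.sum_const, Finset.card_range, nsmul_eq_mul]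
    have hW1int : Integrable (fun ω => (∑ k ∈ Finset.range N, d (xi X k ω)) * EN X γ N ω) P :=
      bdd_mul_EN hX hγ1 hSmeas hSbdd
    have hSbdd2 : ∀ ω, |(∑ k ∈ Finset.range N, d (xi X k ω))^2| ≤ ((N:ℝ) * D)^2 := by
      intro ω
      rw [abs_pow]
      exact pow_le_pow_left₀ (abs_nonneg _) (hSbdd ω) 2
    have hW2int : Integrable (fun ω => ((∑ k ∈ Finset.range N, d (xi X k ω))^2) * EN X γ N ω) P :=
      bdd_mul_EN hX hγ1 (hSmeas.pow_const 2) hSbdd2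
    have hexpint1 : Integrable (fun ω => Real.exp (γ * X (((N+1:ℕ):ℝ) - ((N:ℕ):ℝ)) ω)) P := by
      rw [hts1]; exact hexpX1
    have hdX1int : Integrable (fun ω => d (X 1 ω) * Real.exp (γ * X 1 ω)) P :=
      hexpX1.bdd_mul (hd.comp (hX.meas 1)).aestronglyMeasurable
        (c := D) (Eventually.of_forall fun ω => by simpa [Real.norm_eq_abs] using hD _)
    have hdint1 : Integrable (fun ω => d (X (((N+1:ℕ):ℝ) - ((N:ℕ):ℝ)) ω)
        * Real.exp (γ * X (((N+1:ℕ):ℝ) - ((N:ℕ):ℝ)) ω)) P := by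
      rw [hts1]; exact hdX1int
    have h2dint1 : Integrable (fun ω => (2 * d (X (((N+1:ℕ):ℝ) - ((N:ℕ):ℝ)) ω))
        * Real.exp (γ * X (((N+1:ℕ):ℝ) - ((N:ℕ):ℝ)) ω)) P := by
      rw [hts1]
      exact hexpX1.bdd_mul ((measurable_const.mul (hd.comp (hX.meas 1)))).aestronglyMeasurable
        (c := 2*D) (Eventually.of_forall fun ω => by
          simp only [Real.norm_eq_abs, abs_mul, abs_two]
          have := hD (X 1 ω); nlinarith [abs_nonneg (d (X 1 ω))])
    have hd2int1 : Integrable (fun ω => (d (X (((N+1:ℕ):ℝ) - ((N:ℕ):ℝ)) ω))^2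
        * Real.exp (γ * X (((N+1:ℕ):ℝ) - ((N:ℕ):ℝ)) ω)) P := by
      rw [hts1]
      exact hexpX1.bdd_mul ((hd.comp (hX.meas 1)).pow_const 2).aestronglyMeasurable
        (c := D^2) (Eventually.of_forall fun ω => by
          simp only [Real.norm_eq_abs, abs_pow]
          exact pow_le_pow_left₀ (abs_nonneg _) (hD _) 2)
    obtain ⟨hT1int, hT1eq⟩ := factor_mul hX h0N hNN1
      (W := fun ω => (∑ k ∈ Finset.range N, d (xi X k ω)) * EN X γ N ω)
      (hSmeasFs.mul (EN_meas_Fs hX N)) hW1int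
      (g := fun y => Real.exp (γ * y)) hexpmeas hexpint1
    obtain ⟨hT2int, hT2eq⟩ := factor_mul hX h0N hNN1
      (W := EN X γ N) (EN_meas_Fs hX N) (EN_integrable hX hγ1 N)
      (g := fun y => d y * Real.exp (γ * y)) (hd.mul hexpmeas) hdint1
    obtain ⟨hT3int, hT3eq⟩ := factor_mul hX h0N hNN1
      (W := fun ω => ((∑ k ∈ Finset.range N, d (xi X k ω))^2) * EN X γ N ω)
      ((hSmeasFs.pow_const 2).mul (EN_meas_Fs hX N)) hW2int
      (g := fun y => Real.exp (γ * y)) hexpmeas hexpint1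
    obtain ⟨hT4int, hT4eq⟩ := factor_mul hX h0N hNN1
      (W := fun ω => (∑ k ∈ Finset.range N, d (xi X k ω)) * EN X γ N ω)
      (hSmeasFs.mul (EN_meas_Fs hX N)) hW1int
      (g := fun y => (2 * d y) * Real.exp (γ * y))
      ((measurable_const.mul hd).mul hexpmeas) h2dint1
    obtain ⟨hT5int, hT5eq⟩ := factor_mul hX h0N hNN1
      (W := EN X γ N) (EN_meas_Fs hX N) (EN_integrable hX hγ1 N)
      (g := fun y => (d y)^2 * Real.exp (γ * y)) ((hd.pow_const 2).mul hexpmeas) hd2int1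
    have hexpone : ∫ ω, Real.exp (γ * X (((N+1:ℕ):ℝ) - ((N:ℕ):ℝ)) ω) ∂P = 1 := by
      rw [hts1]; exact exp_integral hX hγ1 1 (by norm_num) (by norm_num)
    have hdzero : ∫ ω, d (X (((N+1:ℕ):ℝ) - ((N:ℕ):ℝ)) ω)
        * Real.exp (γ * X (((N+1:ℕ):ℝ) - ((N:ℕ):ℝ)) ω) ∂P = 0 := by
      rw [hts1]; exact hd0
    have hdsq : ∫ ω, (d (X (((N+1:ℕ):ℝ) - ((N:ℕ):ℝ)) ω))^2
        * Real.exp (γ * X (((N+1:ℕ):ℝ) - ((N:ℕ):ℝ)) ω) ∂P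
        = ∫ ω, (d (X 1 ω))^2 * Real.exp (γ * X 1 ω) ∂P := by rw [hts1]
    constructor
    · have hpt1 : ∀ ω, (∑ k ∈ Finset.range (N+1), d (xi X k ω)) * EN X γ (N+1) ω
        = ((∑ k ∈ Finset.range N, d (xi X k ω)) * EN X γ N ω)
            * Real.exp (γ * (X ((N+1:ℕ):ℝ) ω - X ((N:ℕ):ℝ) ω))
          + EN X γ N ω * (d (xi X N ω)
            * Real.exp (γ * (X ((N+1:ℕ):ℝ) ω - X ((N:ℕ):ℝ) ω))) := by
        intro ω
        rw [Finset.sum_range_succ, EN_succ]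
        simp only [xi]
        ring
      calc ∫ ω, (∑ k ∈ Finset.range (N+1), d (xi X k ω)) * EN X γ (N+1) ω ∂P
          = ∫ ω, (((∑ k ∈ Finset.range N, d (xi X k ω)) * EN X γ N ω)
              * Real.exp (γ * (X ((N+1:ℕ):ℝ) ω - X ((N:ℕ):ℝ) ω))
            + EN X γ N ω * (d (xi X N ω)
              * Real.exp (γ * (X ((N+1:ℕ):ℝ) ω - X ((N:ℕ):ℝ) ω)))) ∂P :=
            integral_congr_ae (Eventually.of_forall hpt1)
        _ = (∫ ω, ((∑ k ∈ Finset.range N, d (xi X k ω)) * EN X γ N ω)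
              * Real.exp (γ * (X ((N+1:ℕ):ℝ) ω - X ((N:ℕ):ℝ) ω)) ∂P)
            + ∫ ω, EN X γ N ω * (d (xi X N ω)
              * Real.exp (γ * (X ((N+1:ℕ):ℝ) ω - X ((N:ℕ):ℝ) ω))) ∂P := by
            apply integral_add hT1int
            exact hT2int.congr (Eventually.of_forall (fun ω => by simp only [xi]))
        _ = 0 := by
            have e1 : ∫ ω, ((∑ k ∈ Finset.range N, d (xi X k ω)) * EN X γ N ω)
                * Real.exp (γ * (X ((N+1:ℕ):ℝ) ω - X ((N:ℕ):ℝ) ω)) ∂P = 0 := by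
              rw [hT1eq, IH1, zero_mul]
            have e2 : ∫ ω, EN X γ N ω * (d (xi X N ω)
                * Real.exp (γ * (X ((N+1:ℕ):ℝ) ω - X ((N:ℕ):ℝ) ω))) ∂P = 0 := by
              have : ∫ ω, EN X γ N ω * (d (xi X N ω)
                  * Real.exp (γ * (X ((N+1:ℕ):ℝ) ω - X ((N:ℕ):ℝ) ω))) ∂P
                  = ∫ ω, EN X γ N ω * (d (X ((N+1:ℕ):ℝ) ω - X ((N:ℕ):ℝ) ω)
                  * Real.exp (γ * (X ((N+1:ℕ):ℝ) ω - X ((N:ℕ):ℝ) ω))) ∂P :=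
                integral_congr_ae (Eventually.of_forall (fun ω => by simp only [xi]))
              rw [this, hT2eq, hdzero, mul_zero]
            rw [e1, e2, add_zero]
    · have hpt2 : ∀ ω, (∑ k ∈ Finset.range (N+1), d (xi X k ω))^2 * EN X γ (N+1) ω
        = (((∑ k ∈ Finset.range N, d (xi X k ω))^2) * EN X γ N ω)
            * Real.exp (γ * (X ((N+1:ℕ):ℝ) ω - X ((N:ℕ):ℝ) ω))
          + (((∑ k ∈ Finset.range N, d (xi X k ω)) * EN X γ N ω)
            * ((2 * d (xi X N ω)) * Real.exp (γ * (X ((N+1:ℕ):ℝ) ω - X ((N:ℕ):ℝ) ω)))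
          + EN X γ N ω * ((d (xi X N ω))^2
            * Real.exp (γ * (X ((N+1:ℕ):ℝ) ω - X ((N:ℕ):ℝ) ω)))) := by
        intro ω
        rw [Finset.sum_range_succ, EN_succ]
        simp only [xi]
        ring
      have hT4int' : Integrable (fun ω => ((∑ k ∈ Finset.range N, d (xi X k ω)) * EN X γ N ω)
          * ((2 * d (xi X N ω)) * Real.exp (γ * (X ((N+1:ℕ):ℝ) ω - X ((N:ℕ):ℝ) ω)))) P :=
        hT4int.congr (Eventually.of_forall (fun ω => by simp only [xi]))
      have hT5int' : Integrable (fun ω => EN X γ N ω * ((d (xi X N ω))^2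
          * Real.exp (γ * (X ((N+1:ℕ):ℝ) ω - X ((N:ℕ):ℝ) ω)))) P :=
        hT5int.congr (Eventually.of_forall (fun ω => by simp only [xi]))
      have e3 : ∫ ω, (((∑ k ∈ Finset.range N, d (xi X k ω))^2) * EN X γ N ω)
          * Real.exp (γ * (X ((N+1:ℕ):ℝ) ω - X ((N:ℕ):ℝ) ω)) ∂P
          = ∫ ω, ((∑ k ∈ Finset.range N, d (xi X k ω))^2) * EN X γ N ω ∂P := by
        rw [hT3eq, hexpone, mul_one]
      have e4 : ∫ ω, ((∑ k ∈ Finset.range N, d (xi X k ω)) * EN X γ N ω)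
          * ((2 * d (xi X N ω)) * Real.exp (γ * (X ((N+1:ℕ):ℝ) ω - X ((N:ℕ):ℝ) ω))) ∂P = 0 := by
        have : ∫ ω, ((∑ k ∈ Finset.range N, d (xi X k ω)) * EN X γ N ω)
            * ((2 * d (xi X N ω)) * Real.exp (γ * (X ((N+1:ℕ):ℝ) ω - X ((N:ℕ):ℝ) ω))) ∂P
            = ∫ ω, ((∑ k ∈ Finset.range N, d (xi X k ω)) * EN X γ N ω)
            * ((2 * d (X ((N+1:ℕ):ℝ) ω - X ((N:ℕ):ℝ) ω))
              * Real.exp (γ * (X ((N+1:ℕ):ℝ) ω - X ((N:ℕ):ℝ) ω))) ∂P :=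
          integral_congr_ae (Eventually.of_forall (fun ω => by simp only [xi]))
        rw [this, hT4eq, IH1, zero_mul]
      have e5 : ∫ ω, EN X γ N ω * ((d (xi X N ω))^2
          * Real.exp (γ * (X ((N+1:ℕ):ℝ) ω - X ((N:ℕ):ℝ) ω))) ∂P
          = ∫ ω, (d (X 1 ω))^2 * Real.exp (γ * X 1 ω) ∂P := by
        have : ∫ ω, EN X γ N ω * ((d (xi X N ω))^2
            * Real.exp (γ * (X ((N+1:ℕ):ℝ) ω - X ((N:ℕ):ℝ) ω))) ∂P
            = ∫ ω, EN X γ N ω * ((d (X ((N+1:ℕ):ℝ) ω - X ((N:ℕ):ℝ) ω))^2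
              * Real.exp (γ * (X ((N+1:ℕ):ℝ) ω - X ((N:ℕ):ℝ) ω))) ∂P :=
          integral_congr_ae (Eventually.of_forall (fun ω => by simp only [xi]))
        rw [this, hT5eq, EN_integral hX hγ1 N, one_mul, hdsq]
      calc ∫ ω, (∑ k ∈ Finset.range (N+1), d (xi X k ω))^2 * EN X γ (N+1) ω ∂P
          = ∫ ω, ((((∑ k ∈ Finset.range N, d (xi X k ω))^2) * EN X γ N ω)
              * Real.exp (γ * (X ((N+1:ℕ):ℝ) ω - X ((N:ℕ):ℝ) ω))
            + (((∑ k ∈ Finset.range N, d (xi X k ω)) * EN X γ N ω)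
              * ((2 * d (xi X N ω)) * Real.exp (γ * (X ((N+1:ℕ):ℝ) ω - X ((N:ℕ):ℝ) ω)))
            + EN X γ N ω * ((d (xi X N ω))^2
              * Real.exp (γ * (X ((N+1:ℕ):ℝ) ω - X ((N:ℕ):ℝ) ω))))) ∂P :=
            integral_congr_ae (Eventually.of_forall hpt2)
        _ = (∫ ω, (((∑ k ∈ Finset.range N, d (xi X k ω))^2) * EN X γ N ω)
              * Real.exp (γ * (X ((N+1:ℕ):ℝ) ω - X ((N:ℕ):ℝ) ω)) ∂P)
            + ((∫ ω, ((∑ k ∈ Finset.range N, d (xi X k ω)) * EN X γ N ω)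
              * ((2 * d (xi X N ω)) * Real.exp (γ * (X ((N+1:ℕ):ℝ) ω - X ((N:ℕ):ℝ) ω))) ∂P)
            + ∫ ω, EN X γ N ω * ((d (xi X N ω))^2
              * Real.exp (γ * (X ((N+1:ℕ):ℝ) ω - X ((N:ℕ):ℝ) ω))) ∂P) := by
            have hT45 : Integrable (fun ω => ((∑ k ∈ Finset.range N, d (xi X k ω)) * EN X γ N ω)
                * ((2 * d (xi X N ω)) * Real.exp (γ * (X ((N+1:ℕ):ℝ) ω - X ((N:ℕ):ℝ) ω)))
              + EN X γ N ω * ((d (xi X N ω))^2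
                * Real.exp (γ * (X ((N+1:ℕ):ℝ) ω - X ((N:ℕ):ℝ) ω)))) P := hT4int'.add hT5int'
            rw [← integral_add hT4int' hT5int']
            exact integral_add hT3int hT45
        _ ≤ ((N:ℝ)) * (∫ ω, (d (X 1 ω))^2 * Real.exp (γ * X 1 ω) ∂P)
            + (0 + ∫ ω, (d (X 1 ω))^2 * Real.exp (γ * X 1 ω) ∂P) := by
            rw [e3, e4, e5]
            exact add_le_add IH2 le_rfl
        _ = ((N+1:ℕ):ℝ) * ∫ ω, (d (X 1 ω))^2 * Real.exp (γ * X 1 ω) ∂P := by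
            push_cast; ring

/-- the exponential is a.e. equal to the martingale `EN` (since `X 0 = 0` a.s.) -/
lemma exp_ae_EN (hX : LevyProcess P X) (N : ℕ) :
    (fun ω => Real.exp (γ * X ((N:ℕ):ℝ) ω)) =ᵐ[P] EN X γ N := by
  filter_upwards [hX.init] with ω hω
  simp [EN, hω]


lemma key_pointwise {a c e xx S Sη Rh XN Nr : ℝ} (hc : 0 < c) (hNr : 0 < Nr)
    (hbe : a + 2*c ≤ e) (hin : XN ≤ xx) (hxx : xx ≤ a * Nr)
    (hSeq : S = Sη - Nr * e) (hηsum : Sη ≤ XN + Rh) (hRhnn : 0 ≤ Rh) :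
    (1:ℝ) ≤ (c^2 * Nr^2)⁻¹ * S^2 + (c * Nr)⁻¹ * Rh := by
  have hpos1 : (0:ℝ) < c^2 * Nr^2 := by positivity
  have hpos2 : (0:ℝ) < c * Nr := by positivity
  have hterm1nn : (0:ℝ) ≤ (c^2 * Nr^2)⁻¹ * S^2 := by positivity
  have hterm2nn : (0:ℝ) ≤ (c * Nr)⁻¹ * Rh := mul_nonneg (inv_nonneg.2 hpos2.le) hRhnn
  by_cases hcase : Sη ≤ (a + c) * Nr
  · have hS : S ≤ -(c * Nr) := by
      rw [hSeq]
      have : Nr * (a + 2*c) ≤ Nr * e := by nlinarith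
      nlinarith
    have hSsq : c^2 * Nr^2 ≤ S^2 := by nlinarith [sq_nonneg (S + c * Nr)]
    have h1 : (1:ℝ) ≤ (c^2 * Nr^2)⁻¹ * S^2 := by
      calc (1:ℝ) = (c^2 * Nr^2)⁻¹ * (c^2 * Nr^2) := by field_simp
        _ ≤ (c^2 * Nr^2)⁻¹ * S^2 := mul_le_mul_of_nonneg_left hSsq (by positivity)
    linarith
  · push_neg at hcase
    have hRh : c * Nr ≤ Rh := by nlinarith
    have h2 : (1:ℝ) ≤ (c * Nr)⁻¹ * Rh := by
      calc (1:ℝ) = (c * Nr)⁻¹ * (c * Nr) := by field_simp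
        _ ≤ (c * Nr)⁻¹ * Rh := mul_le_mul_of_nonneg_left hRh (by positivity)
    linarith

/-- Tilted weak-law bound: the contribution of `{X_N ≤ x}` to the exponential
martingale is small when `x ≤ a N` with `a` below the tilted mean. -/
lemma event_bound (hX : LevyProcess P X) (hγ1 : ∫ ω, Real.exp (γ * X 1 ω) ∂P = 1)
    {a c e V R : ℝ} (hc : 0 < c)
    {η ρ : ℝ → ℝ} (hη : Measurable η) (hρ : Measurable ρ) (hρ0 : ∀ y, 0 ≤ ρ y)
    (hηρ : ∀ y, η y ≤ y + ρ y)
    {D : ℝ} (hD : ∀ y, |η y| ≤ D)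
    (he : e = ∫ ω, η (X 1 ω) * Real.exp (γ * X 1 ω) ∂P) (hbe : a + 2*c ≤ e)
    (hρint : Integrable (fun ω => ρ (X 1 ω) * Real.exp (γ * X 1 ω)) P)
    (hV : V = ∫ ω, (η (X 1 ω) - e)^2 * Real.exp (γ * X 1 ω) ∂P)
    (hR : R = ∫ ω, ρ (X 1 ω) * Real.exp (γ * X 1 ω) ∂P)
    {N : ℕ} (hN : 1 ≤ N) {xx : ℝ} (hxx : xx ≤ a * N) :
    ∫ ω in {ω | X ((N:ℕ):ℝ) ω ≤ xx}, Real.exp (γ * X ((N:ℕ):ℝ) ω) ∂P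
      ≤ V / (c^2 * N) + R / c := by
  have hNpos : (0:ℝ) < (N:ℝ) := by exact_mod_cast hN
  have hexpmeas : Measurable (fun y : ℝ => Real.exp (γ * y)) :=
    (measurable_const.mul measurable_id).exp
  have hexpX1 : Integrable (fun ω => Real.exp (γ * X 1 ω)) P :=
    exp_integrable hX hγ1 1 (by norm_num) (by norm_num)
  -- the centered truncated function
  set d : ℝ → ℝ := fun y => η y - e with hdd
  have hdmeas : Measurable d := hη.sub measurable_const
  have hdD : ∀ y, |d y| ≤ D + |e| := by
    intro y
    calc |η y - e| ≤ |η y| + |e| := abs_sub _ _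
      _ ≤ D + |e| := by have := hD y; linarith
  have hηint : Integrable (fun ω => η (X 1 ω) * Real.exp (γ * X 1 ω)) P :=
    hexpX1.bdd_mul (hη.comp (hX.meas 1)).aestronglyMeasurable
      (c := D) (Eventually.of_forall fun ω => by simpa [Real.norm_eq_abs] using hD _)
  have hd0 : ∫ ω, d (X 1 ω) * Real.exp (γ * X 1 ω) ∂P = 0 := by
    have h1 : (fun ω => d (X 1 ω) * Real.exp (γ * X 1 ω))
        = fun ω => η (X 1 ω) * Real.exp (γ * X 1 ω) - e * Real.exp (γ * X 1 ω) := by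
      funext ω; simp only [hdd]; ring
    rw [h1, integral_sub hηint (hexpX1.const_mul e), integral_const_mul, hγ1, ← he]
    ring
  obtain ⟨hvar0, hvar⟩ := sum_centered hX hγ1 hdmeas hdD hd0 N
  obtain ⟨hrhoint, hrhoeq⟩ := rho_sum hX hγ1 hρ hρint N
  -- abbreviations
  set S : Ω → ℝ := fun ω => ∑ k ∈ Finset.range N, d (xi X k ω) with hSS
  set Rh : Ω → ℝ := fun ω => ∑ k ∈ Finset.range N, ρ (xi X k ω) with hRR
  have hSmeas : Measurable S := Finset.measurable_sum _ (fun k _ => hdmeas.comp (xi_meas hX k))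
  have hSbdd : ∀ ω, |S ω ^ 2| ≤ ((N:ℝ) * (D + |e|))^2 := by
    intro ω
    rw [abs_pow]
    apply pow_le_pow_left₀ (abs_nonneg _)
    calc |S ω| ≤ ∑ k ∈ Finset.range N, |d (xi X k ω)| := Finset.abs_sum_le_sum_abs _ _
      _ ≤ ∑ _k ∈ Finset.range N, (D + |e|) := Finset.sum_le_sum (fun k _ => hdD _)
      _ = (N:ℝ) * (D + |e|) := by rw [Finset.sum_const, Finset.card_range, nsmul_eq_mul]
  have hS2int : Integrable (fun ω => S ω ^ 2 * EN X γ N ω) P :=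
    bdd_mul_EN hX hγ1 (hSmeas.pow_const 2) hSbdd
  -- the pointwise Chebyshev-type inequality
  have hptae : ∀ᵐ ω ∂P, Set.indicator {ω | X ((N:ℕ):ℝ) ω ≤ xx}
      (fun ω => Real.exp (γ * X ((N:ℕ):ℝ) ω)) ω
      ≤ (c^2 * (N:ℝ)^2)⁻¹ * (S ω ^ 2 * EN X γ N ω) + (c * (N:ℝ))⁻¹ * (Rh ω * EN X γ N ω) := by
    filter_upwards [hX.init] with ω hω0
    have hENnn : 0 ≤ EN X γ N ω := Real.exp_nonneg _
    have hRhnn : 0 ≤ Rh ω := Finset.sum_nonneg (fun k _ => hρ0 _)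
    have hRHSnn2 : 0 ≤ (c * (N:ℝ))⁻¹ * (Rh ω * EN X γ N ω) := by positivity
    have hRHSnn1 : 0 ≤ (c^2 * (N:ℝ)^2)⁻¹ * (S ω ^ 2 * EN X γ N ω) := by positivity
    by_cases hin : X ((N:ℕ):ℝ) ω ≤ xx
    · have hmem : ω ∈ {ω | X ((N:ℕ):ℝ) ω ≤ xx} := hin
      rw [Set.indicator_of_mem hmem]
      have hENeq : EN X γ N ω = Real.exp (γ * X ((N:ℕ):ℝ) ω) := by simp [EN, hω0]
      -- the sum of increments equals X_N
      have hsum : ∑ k ∈ Finset.range N, xi X k ω = X ((N:ℕ):ℝ) ω := by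
        have h := Finset.sum_range_sub (fun k => X ((k:ℕ):ℝ) ω) N
        simpa [xi, hω0] using h
      have hSeq : S ω = (∑ k ∈ Finset.range N, η (xi X k ω)) - (N:ℝ) * e := by
        simp only [hSS, hdd]
        rw [Finset.sum_sub_distrib, Finset.sum_const, Finset.card_range, nsmul_eq_mul]
      have hηsum : (∑ k ∈ Finset.range N, η (xi X k ω)) ≤ X ((N:ℕ):ℝ) ω + Rh ω := by
        rw [← hsum, ← Finset.sum_add_distrib]
        exact Finset.sum_le_sum (fun k _ => hηρ _)
      have hkey : (1:ℝ) ≤ (c^2 * (N:ℝ)^2)⁻¹ * S ω ^ 2 + (c * (N:ℝ))⁻¹ * Rh ω :=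
        key_pointwise hc hNpos hbe hin hxx hSeq hηsum hRhnn
      calc Real.exp (γ * X ((N:ℕ):ℝ) ω) = 1 * EN X γ N ω := by rw [hENeq, one_mul]
        _ ≤ ((c^2 * (N:ℝ)^2)⁻¹ * S ω ^ 2 + (c * (N:ℝ))⁻¹ * Rh ω) * EN X γ N ω := by
            apply mul_le_mul_of_nonneg_right hkey hENnn
        _ = (c^2 * (N:ℝ)^2)⁻¹ * (S ω ^ 2 * EN X γ N ω)
            + (c * (N:ℝ))⁻¹ * (Rh ω * EN X γ N ω) := by ring
    · have hmem : ω ∉ {ω | X ((N:ℕ):ℝ) ω ≤ xx} := hin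
      rw [Set.indicator_of_notMem hmem]
      positivity
  -- integrate
  have hmeasset : MeasurableSet {ω | X ((N:ℕ):ℝ) ω ≤ xx} :=
    measurableSet_le (hX.meas _) measurable_const
  have hLint : Integrable (Set.indicator {ω | X ((N:ℕ):ℝ) ω ≤ xx}
      (fun ω => Real.exp (γ * X ((N:ℕ):ℝ) ω))) P :=
    (exp_integrable hX hγ1 (N:ℚ) (by positivity) (by push_cast; ring)).indicator hmeasset
  have hRint : Integrable (fun ω => (c^2 * (N:ℝ)^2)⁻¹ * (S ω ^ 2 * EN X γ N ω)
      + (c * (N:ℝ))⁻¹ * (Rh ω * EN X γ N ω)) P :=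
    (hS2int.const_mul _).add (hrhoint.const_mul _)
  calc ∫ ω in {ω | X ((N:ℕ):ℝ) ω ≤ xx}, Real.exp (γ * X ((N:ℕ):ℝ) ω) ∂P
      = ∫ ω, Set.indicator {ω | X ((N:ℕ):ℝ) ω ≤ xx}
          (fun ω => Real.exp (γ * X ((N:ℕ):ℝ) ω)) ω ∂P := (integral_indicator hmeasset).symm
    _ ≤ ∫ ω, ((c^2 * (N:ℝ)^2)⁻¹ * (S ω ^ 2 * EN X γ N ω)
          + (c * (N:ℝ))⁻¹ * (Rh ω * EN X γ N ω)) ∂P := integral_mono_ae hLint hRint hptae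
    _ = (c^2 * (N:ℝ)^2)⁻¹ * (∫ ω, S ω ^ 2 * EN X γ N ω ∂P)
          + (c * (N:ℝ))⁻¹ * ∫ ω, Rh ω * EN X γ N ω ∂P := by
        rw [integral_add (hS2int.const_mul _) (hrhoint.const_mul _),
          integral_const_mul, integral_const_mul]
    _ ≤ (c^2 * (N:ℝ)^2)⁻¹ * ((N:ℝ) * V) + (c * (N:ℝ))⁻¹ * ((N:ℝ) * R) := by
        apply add_le_add
        · apply mul_le_mul_of_nonneg_left _ (by positivity)
          rw [hV]
          exact hvar
        · rw [hrhoeq, ← hR]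
    _ = V / (c^2 * N) + R / c := by
        field_simp

lemma indicator_one_mul {A : Set Ω} (f : Ω → ℝ) (ω : Ω) :
    (A.indicator (fun _ => (1:ℝ)) ω) * f ω = A.indicator f ω := by
  by_cases h : ω ∈ A <;> simp [h]

lemma finite_bound (hX : LevyProcess P X) (hγ1 : ∫ ω, Real.exp (γ * X 1 ω) ∂P = 1)
    (hγpos : 0 < γ) {tt τx : ℝ} (N : ℕ) (hNt : ((N:ℕ):ℝ) ≤ tt)
    (F : Finset ℚ) (hF : ∀ q ∈ F, tt < (q:ℝ)) :
    Real.exp (γ * τx) * (P ({ω | X ((N:ℕ):ℝ) ω ≤ τx}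
        ∩ ⋃ q ∈ F, {ω | τx < X ((q:ℚ):ℝ) ω})).toReal
      ≤ ∫ ω in {ω | X ((N:ℕ):ℝ) ω ≤ τx}, Real.exp (γ * X ((N:ℕ):ℝ) ω) ∂P := by
  classical
  have htt0 : (0:ℝ) ≤ tt := le_trans (by positivity) hNt
  have hmeasN : MeasurableSet {ω | X ((N:ℕ):ℝ) ω ≤ τx} :=
    measurableSet_le (hX.meas _) measurable_const
  have hI0 : 0 ≤ ∫ ω in {ω | X ((N:ℕ):ℝ) ω ≤ τx}, Real.exp (γ * X ((N:ℕ):ℝ) ω) ∂P :=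
    setIntegral_nonneg hmeasN (fun ω _ => Real.exp_nonneg _)
  rcases F.eq_empty_or_nonempty with rfl | hne
  · simpa using hI0
  set T : ℚ := F.max' hne with hTdef
  have hTF : T ∈ F := F.max'_mem hne
  have h0q : ∀ q ∈ F, (0:ℚ) ≤ q := by
    intro q hq
    have : (0:ℝ) ≤ (q:ℝ) := le_of_lt (lt_of_le_of_lt htt0 (hF q hq))
    exact_mod_cast this
  have hqT : ∀ q ∈ F, (q:ℝ) ≤ (T:ℝ) := fun q hq => by exact_mod_cast F.le_max' q hq
  -- first passage decomposition
  set A : ℚ → Set Ω := fun q => ({ω | X ((N:ℕ):ℝ) ω ≤ τx} ∩ {ω | τx < X ((q:ℚ):ℝ) ω})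
    ∩ ⋂ q' ∈ F.filter (· < q), {ω | X ((q':ℚ):ℝ) ω ≤ τx} with hAdef
  have hAmeas : ∀ q, MeasurableSet (A q) := by
    intro q
    apply MeasurableSet.inter
    · exact hmeasN.inter (measurableSet_lt measurable_const (hX.meas _))
    · exact MeasurableSet.biInter (Set.to_countable _)
        (fun q' _ => measurableSet_le (hX.meas _) measurable_const)
  have hAsub : ∀ q, A q ⊆ {ω | X ((N:ℕ):ℝ) ω ≤ τx} := fun q ω hω => hω.1.1
  have hAq : ∀ q, A q ⊆ {ω | τx < X ((q:ℚ):ℝ) ω} := fun q ω hω => hω.1.2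
  have hunion : {ω | X ((N:ℕ):ℝ) ω ≤ τx} ∩ (⋃ q ∈ F, {ω | τx < X ((q:ℚ):ℝ) ω})
      = ⋃ q ∈ F, A q := by
    ext ω
    simp only [Set.mem_inter_iff, Set.mem_iUnion, Set.mem_setOf_eq, exists_prop]
    constructor
    · rintro ⟨hXN, q0, hq0F, hq0⟩
      have hne' : (F.filter (fun q => τx < X ((q:ℚ):ℝ) ω)).Nonempty :=
        ⟨q0, Finset.mem_filter.2 ⟨hq0F, hq0⟩⟩
      set qs := (F.filter (fun q => τx < X ((q:ℚ):ℝ) ω)).min' hne' with hqs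
      have hqsmem := Finset.min'_mem _ hne'
      rw [Finset.mem_filter] at hqsmem
      refine ⟨qs, hqsmem.1, ⟨⟨hXN, hqsmem.2⟩, ?_⟩⟩
      apply Set.mem_iInter₂.2
      intro q' hq'
      rw [Finset.mem_filter] at hq'
      show X ((q':ℚ):ℝ) ω ≤ τx
      by_contra hcon
      push_neg at hcon
      have : qs ≤ q' := Finset.min'_le _ _ (Finset.mem_filter.2 ⟨hq'.1, hcon⟩)
      exact absurd hq'.2 (not_lt.2 this)
    · rintro ⟨q, hqF, hA⟩
      exact ⟨hA.1.1, q, hqF, hA.1.2⟩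
  have hdisj : (↑F : Set ℚ).PairwiseDisjoint A := by
    intro q1 h1 q2 h2 hne12
    rw [Finset.mem_coe] at h1 h2
    rcases lt_or_gt_of_ne hne12 with hlt | hgt
    · apply Set.disjoint_left.2
      intro ω hω1 hω2
      have hle : X ((q1:ℚ):ℝ) ω ≤ τx := by
        have := hω2.2
        simp only [Set.mem_iInter] at this
        exact this q1 (Finset.mem_filter.2 ⟨h1, hlt⟩)
      exact absurd (hAq q1 hω1) (not_lt.2 hle)
    · apply Set.disjoint_left.2
      intro ω hω1 hω2
      have hle : X ((q2:ℚ):ℝ) ω ≤ τx := by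
        have := hω1.2
        simp only [Set.mem_iInter] at this
        exact this q2 (Finset.mem_filter.2 ⟨h2, hgt⟩)
      exact absurd (hAq q2 hω2) (not_lt.2 hle)
  -- a.e.-free computations
  have hexpq_int : ∀ q ∈ F, Integrable (fun ω => Real.exp (γ * X ((q:ℚ):ℝ) ω)) P :=
    fun q hq => exp_integrable hX hγ1 q (h0q q hq) rfl
  have hexpT_int : Integrable (fun ω => Real.exp (γ * X ((T:ℚ):ℝ) ω)) P :=
    hexpq_int T hTF
  -- A q is measurable for the filtration at time q
  have hAmeasFs : ∀ q ∈ F, MeasurableSet[Fs X ((q:ℚ):ℝ)] (A q) := by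
    intro q hq
    have h0q' : (0:ℝ) ≤ (q:ℝ) := by exact_mod_cast h0q q hq
    apply MeasurableSet.inter
    · apply MeasurableSet.inter
      · exact measurableSet_le (measFs (by positivity) (le_trans hNt (le_of_lt (hF q hq))))
          measurable_const
      · exact measurableSet_lt measurable_const (measFs h0q' le_rfl)
    · apply MeasurableSet.biInter (Set.to_countable _)
      intro q' hq'
      have hq2 : q' ∈ F ∧ q' < q := by
        have : q' ∈ F.filter (· < q) := hq'
        simpa [Finset.mem_filter] using this
      have h0q'' : (0:ℝ) ≤ ((q':ℚ):ℝ) := by exact_mod_cast h0q q' hq2.1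
      have : ((q':ℚ):ℝ) ≤ (q:ℝ) := by exact_mod_cast le_of_lt hq2.2
      exact measurableSet_le (measFs h0q'' this) measurable_const
  -- shift the exponent from q to T on each A q
  have hshift : ∀ q ∈ F, ∫ ω in A q, Real.exp (γ * X ((q:ℚ):ℝ) ω) ∂P
      = ∫ ω in A q, Real.exp (γ * X ((T:ℚ):ℝ) ω) ∂P := by
    intro q hq
    have h0q' : (0:ℝ) ≤ (q:ℝ) := by exact_mod_cast h0q q hq
    have hqT' : (0:ℚ) ≤ T - q := by
      have : q ≤ T := F.le_max' q hq
      linarith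
    have hWmeas : Measurable[Fs X ((q:ℚ):ℝ)] ((A q).indicator (fun _ => (1:ℝ))) :=
      measurable_const.indicator (hAmeasFs q hq)
    have hWint : Integrable (fun ω => (A q).indicator (fun _ => (1:ℝ)) ω
        * Real.exp (γ * X ((q:ℚ):ℝ) ω)) P := by
      apply (hexpq_int q hq).bdd_mul (c := 1)
      · exact ((measurable_one.indicator (hAmeas q))).aestronglyMeasurable
      · refine Eventually.of_forall (fun ω => ?_)
        by_cases h : ω ∈ A q <;> simp [h]
    have hms := martingale_shift hX hγ1 h0q' (T - q) hqT' (by push_cast; ring) hWmeas hWint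
    calc ∫ ω in A q, Real.exp (γ * X ((q:ℚ):ℝ) ω) ∂P
        = ∫ ω, (A q).indicator (fun _ => (1:ℝ)) ω * Real.exp (γ * X ((q:ℚ):ℝ) ω) ∂P := by
          rw [← integral_indicator (hAmeas q)]
          exact integral_congr_ae (Eventually.of_forall fun ω =>
            (indicator_one_mul (fun ω => Real.exp (γ * X ((q:ℚ):ℝ) ω)) ω).symm)
      _ = ∫ ω, (A q).indicator (fun _ => (1:ℝ)) ω * Real.exp (γ * X ((T:ℚ):ℝ) ω) ∂P := hms.symm
      _ = ∫ ω in A q, Real.exp (γ * X ((T:ℚ):ℝ) ω) ∂P := by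
          rw [← integral_indicator (hAmeas q)]
          exact integral_congr_ae (Eventually.of_forall fun ω =>
            indicator_one_mul (fun ω => Real.exp (γ * X ((T:ℚ):ℝ) ω)) ω)
  -- per-q bound
  have hperq : ∀ q ∈ F, Real.exp (γ * τx) * (P (A q)).toReal
      ≤ ∫ ω in A q, Real.exp (γ * X ((T:ℚ):ℝ) ω) ∂P := by
    intro q hq
    rw [← hshift q hq]
    have h1 : ∫ ω in A q, Real.exp (γ * τx) ∂P = (P (A q)).toReal * Real.exp (γ * τx) := by
      rw [setIntegral_const, smul_eq_mul]; rfl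
    rw [mul_comm, ← h1]
    apply setIntegral_mono_on (integrableOn_const (measure_ne_top P _))
      ((hexpq_int q hq).integrableOn) (hAmeas q)
    intro ω hω
    have := hAq q hω
    apply Real.exp_le_exp.2
    apply mul_le_mul_of_nonneg_left (le_of_lt this) hγpos.le
  -- sum over q
  have hsum : ∑ q ∈ F, ∫ ω in A q, Real.exp (γ * X ((T:ℚ):ℝ) ω) ∂P
      = ∫ ω in ⋃ q ∈ F, A q, Real.exp (γ * X ((T:ℚ):ℝ) ω) ∂P :=
    (integral_biUnion_finset F (fun q _ => hAmeas q) hdisj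
      (fun q _ => hexpT_int.integrableOn)).symm
  have hmono : ∫ ω in ⋃ q ∈ F, A q, Real.exp (γ * X ((T:ℚ):ℝ) ω) ∂P
      ≤ ∫ ω in {ω | X ((N:ℕ):ℝ) ω ≤ τx}, Real.exp (γ * X ((T:ℚ):ℝ) ω) ∂P := by
    apply setIntegral_mono_set hexpT_int.integrableOn
      (Eventually.of_forall fun ω => Real.exp_nonneg _)
    exact HasSubset.Subset.eventuallyLE (Set.iUnion₂_subset (fun q _ => hAsub q))
  have hback : ∫ ω in {ω | X ((N:ℕ):ℝ) ω ≤ τx}, Real.exp (γ * X ((T:ℚ):ℝ) ω) ∂P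
      = ∫ ω in {ω | X ((N:ℕ):ℝ) ω ≤ τx}, Real.exp (γ * X ((N:ℕ):ℝ) ω) ∂P := by
    have hqT' : (0:ℚ) ≤ T - (N:ℚ) := by
      have h1 : ((N:ℚ):ℝ) ≤ tt := by push_cast; exact_mod_cast hNt
      have h2 : ((N:ℚ):ℝ) < (T:ℝ) := lt_of_le_of_lt h1 (hF T hTF)
      have : ((N:ℚ):ℚ) ≤ T := by exact_mod_cast le_of_lt h2
      linarith
    have hWmeas : Measurable[Fs X ((N:ℕ):ℝ)]
        (({ω | X ((N:ℕ):ℝ) ω ≤ τx}).indicator (fun _ => (1:ℝ))) := by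
      apply measurable_const.indicator
      exact measurableSet_le (measFs (by positivity) le_rfl) measurable_const
    have hWint : Integrable (fun ω => ({ω | X ((N:ℕ):ℝ) ω ≤ τx}).indicator (fun _ => (1:ℝ)) ω
        * Real.exp (γ * X ((N:ℕ):ℝ) ω)) P := by
      apply (exp_integrable hX hγ1 (N:ℚ) (by positivity) (by push_cast; ring)).bdd_mul (c := 1)
      · exact ((measurable_one.indicator hmeasN)).aestronglyMeasurable
      · refine Eventually.of_forall (fun ω => ?_)
        by_cases h : ω ∈ {ω | X ((N:ℕ):ℝ) ω ≤ τx} <;> simp [h]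
    have hms := martingale_shift hX hγ1 (by positivity : (0:ℝ) ≤ ((N:ℕ):ℝ)) (T - (N:ℚ)) hqT'
      (by push_cast; ring) hWmeas hWint
    calc ∫ ω in {ω | X ((N:ℕ):ℝ) ω ≤ τx}, Real.exp (γ * X ((T:ℚ):ℝ) ω) ∂P
        = ∫ ω, ({ω | X ((N:ℕ):ℝ) ω ≤ τx}).indicator (fun _ => (1:ℝ)) ω
            * Real.exp (γ * X ((T:ℚ):ℝ) ω) ∂P := by
          rw [← integral_indicator hmeasN]
          exact integral_congr_ae (Eventually.of_forall fun ω =>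
            (indicator_one_mul (fun ω => Real.exp (γ * X ((T:ℚ):ℝ) ω)) ω).symm)
      _ = ∫ ω, ({ω | X ((N:ℕ):ℝ) ω ≤ τx}).indicator (fun _ => (1:ℝ)) ω
            * Real.exp (γ * X ((N:ℕ):ℝ) ω) ∂P := hms
      _ = ∫ ω in {ω | X ((N:ℕ):ℝ) ω ≤ τx}, Real.exp (γ * X ((N:ℕ):ℝ) ω) ∂P := by
          rw [← integral_indicator hmeasN]
          exact integral_congr_ae (Eventually.of_forall fun ω =>
            indicator_one_mul (fun ω => Real.exp (γ * X ((N:ℕ):ℝ) ω)) ω)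
  calc Real.exp (γ * τx) * (P ({ω | X ((N:ℕ):ℝ) ω ≤ τx}
        ∩ ⋃ q ∈ F, {ω | τx < X ((q:ℚ):ℝ) ω})).toReal
      = Real.exp (γ * τx) * (P (⋃ q ∈ F, A q)).toReal := by rw [hunion]
    _ = Real.exp (γ * τx) * ∑ q ∈ F, (P (A q)).toReal := by
        rw [measure_biUnion_finset hdisj (fun q _ => hAmeas q)]
        rw [ENNReal.toReal_sum (fun q _ => measure_ne_top P _)]
    _ = ∑ q ∈ F, Real.exp (γ * τx) * (P (A q)).toReal := Finset.mul_sum _ _ _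
    _ ≤ ∑ q ∈ F, ∫ ω in A q, Real.exp (γ * X ((T:ℚ):ℝ) ω) ∂P :=
        Finset.sum_le_sum hperq
    _ = ∫ ω in ⋃ q ∈ F, A q, Real.exp (γ * X ((T:ℚ):ℝ) ω) ∂P := hsum
    _ ≤ ∫ ω in {ω | X ((N:ℕ):ℝ) ω ≤ τx}, Real.exp (γ * X ((T:ℚ):ℝ) ω) ∂P := hmono
    _ = ∫ ω in {ω | X ((N:ℕ):ℝ) ω ≤ τx}, Real.exp (γ * X ((N:ℕ):ℝ) ω) ∂P := hback

lemma step1 (hX : LevyProcess P X) (hγ1 : ∫ ω, Real.exp (γ * X 1 ω) ∂P = 1)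
    (hγpos : 0 < γ) {tt τx : ℝ} (N : ℕ) (hNt : ((N:ℕ):ℝ) ≤ tt) :
    Real.exp (γ * τx) * (P {ω | (∀ s : ℝ, 0 ≤ s → s ≤ tt → X s ω ≤ τx)
        ∧ ∃ s : ℝ, 0 ≤ s ∧ τx < X s ω}).toReal
      ≤ ∫ ω in {ω | X ((N:ℕ):ℝ) ω ≤ τx}, Real.exp (γ * X ((N:ℕ):ℝ) ω) ∂P := by
  classical
  have htt0 : (0:ℝ) ≤ tt := le_trans (by positivity) hNt
  have hmeasN : MeasurableSet {ω | X ((N:ℕ):ℝ) ω ≤ τx} :=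
    measurableSet_le (hX.meas _) measurable_const
  set I := ∫ ω in {ω | X ((N:ℕ):ℝ) ω ≤ τx}, Real.exp (γ * X ((N:ℕ):ℝ) ω) ∂P with hIdef
  have hI0 : 0 ≤ I := setIntegral_nonneg hmeasN (fun ω _ => Real.exp_nonneg _)
  set eN : ℕ ≃ ℚ := (Denumerable.eqv ℚ).symm with heN
  set C : ℕ → Set Ω := fun i => if tt < ((eN i : ℚ):ℝ)
    then {ω | X ((N:ℕ):ℝ) ω ≤ τx} ∩ {ω | τx < X ((eN i : ℚ):ℝ) ω} else ∅ with hCdef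
  have hCmeas : ∀ i, MeasurableSet (C i) := by
    intro i
    rw [hCdef]
    dsimp only
    split_ifs
    · exact hmeasN.inter (measurableSet_lt measurable_const (hX.meas _))
    · exact MeasurableSet.empty
  -- a.e. inclusion into the countable union
  have hsub : ∀ᵐ ω ∂P, ω ∈ {ω | (∀ s : ℝ, 0 ≤ s → s ≤ tt → X s ω ≤ τx)
      ∧ ∃ s : ℝ, 0 ≤ s ∧ τx < X s ω} → ω ∈ ⋃ i, C i := by
    filter_upwards [hX.rightCont] with ω hrc hS
    obtain ⟨h1, s, hs0, hsx⟩ := hS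
    have hst : tt < s := by
      by_contra h
      push_neg at h
      exact absurd hsx (not_lt.2 (h1 s hs0 h))
    have hmem : (fun u => X u ω) ⁻¹' (Set.Ioi τx) ∈ nhdsWithin s (Set.Ici s) :=
      hrc s hs0 (isOpen_Ioi.mem_nhds hsx)
    rw [Metric.mem_nhdsWithin_iff] at hmem
    obtain ⟨ε, hε, hball⟩ := hmem
    obtain ⟨q, hq1, hq2⟩ := exists_rat_btwn (lt_add_of_pos_right s hε)
    have hqmem : (q:ℝ) ∈ Metric.ball s ε ∩ Set.Ici s := by
      constructor
      · rw [Metric.mem_ball, Real.dist_eq, abs_of_nonneg (by linarith)]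
        linarith
      · exact le_of_lt hq1
    have hXq : τx < X ((q:ℚ):ℝ) ω := hball hqmem
    apply Set.mem_iUnion.2
    refine ⟨eN.symm q, ?_⟩
    rw [hCdef]
    dsimp only
    rw [eN.apply_symm_apply q, if_pos (by linarith : tt < ((q:ℚ):ℝ))]
    exact ⟨h1 ((N:ℕ):ℝ) (by positivity) hNt, hXq⟩
  have hPS : P {ω | (∀ s : ℝ, 0 ≤ s → s ≤ tt → X s ω ≤ τx)
      ∧ ∃ s : ℝ, 0 ≤ s ∧ τx < X s ω} ≤ P (⋃ i, C i) := measure_mono_ae hsub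
  -- continuity from below
  have hmonoU : Monotone (fun M => ⋃ i ∈ Finset.range M, C i) := by
    intro M M' h
    apply Set.biUnion_subset_biUnion_left
    intro i hi
    exact Finset.mem_range.2 (lt_of_lt_of_le (Finset.mem_range.1 hi) h)
  have hUU : ⋃ i, C i = ⋃ M, ⋃ i ∈ Finset.range M, C i := by
    ext ω
    simp only [Set.mem_iUnion, exists_prop, Finset.mem_range]
    constructor
    · rintro ⟨i, hi⟩; exact ⟨i+1, i, Nat.lt_succ_self i, hi⟩
    · rintro ⟨M, i, _, hi⟩; exact ⟨i, hi⟩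
  have hUsup : P (⋃ i, C i) = ⨆ M, P (⋃ i ∈ Finset.range M, C i) := by
    rw [hUU]
    exact Directed.measure_iUnion (hmonoU.directed_le)
  -- each finite union satisfies the bound
  have hfin : ∀ M : ℕ, P (⋃ i ∈ Finset.range M, C i)
      ≤ ENNReal.ofReal (Real.exp (-(γ * τx)) * I) := by
    intro M
    set F : Finset ℚ := (Finset.range M).image eN |>.filter (fun q => tt < (q:ℝ)) with hFdef
    have hF : ∀ q ∈ F, tt < (q:ℝ) := by
      intro q hq
      rw [hFdef, Finset.mem_filter] at hq
      exact hq.2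
    have hset : ⋃ i ∈ Finset.range M, C i
        = {ω | X ((N:ℕ):ℝ) ω ≤ τx} ∩ ⋃ q ∈ F, {ω | τx < X ((q:ℚ):ℝ) ω} := by
      ext ω
      simp only [Set.mem_iUnion, exists_prop, Set.mem_inter_iff, Set.mem_setOf_eq]
      constructor
      · rintro ⟨i, hiM, hCi⟩
        rw [hCdef] at hCi
        dsimp only at hCi
        by_cases h : tt < ((eN i : ℚ):ℝ)
        · rw [if_pos h] at hCi
          refine ⟨hCi.1, eN i, ?_, hCi.2⟩
          rw [hFdef, Finset.mem_filter]
          exact ⟨Finset.mem_image_of_mem _ hiM, h⟩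
        · rw [if_neg h] at hCi
          exact absurd hCi (Set.notMem_empty ω)
      · rintro ⟨hXN, q, hqF, hq⟩
        rw [hFdef, Finset.mem_filter] at hqF
        obtain ⟨hqim, hqtt⟩ := hqF
        obtain ⟨i, hiM, hiq⟩ := Finset.mem_image.1 hqim
        refine ⟨i, hiM, ?_⟩
        rw [hCdef]
        dsimp only
        rw [hiq, if_pos hqtt]
        exact ⟨hXN, hq⟩
    have hbound := finite_bound (τx := τx) hX hγ1 hγpos N hNt F hF
    rw [← hIdef] at hbound
    have htoReal : (P (⋃ i ∈ Finset.range M, C i)).toReal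
        ≤ Real.exp (-(γ * τx)) * I := by
      rw [hset]
      have hpos : (0:ℝ) < Real.exp (γ * τx) := Real.exp_pos _
      have h2 : (P ({ω | X ((N:ℕ):ℝ) ω ≤ τx} ∩ ⋃ q ∈ F, {ω | τx < X ((q:ℚ):ℝ) ω})).toReal
          = Real.exp (-(γ * τx)) * (Real.exp (γ * τx)
            * (P ({ω | X ((N:ℕ):ℝ) ω ≤ τx} ∩ ⋃ q ∈ F, {ω | τx < X ((q:ℚ):ℝ) ω})).toReal) := by
        rw [← mul_assoc, ← Real.exp_add]
        simp
      rw [h2]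
      exact mul_le_mul_of_nonneg_left hbound (Real.exp_nonneg _)
    calc P (⋃ i ∈ Finset.range M, C i)
        = ENNReal.ofReal ((P (⋃ i ∈ Finset.range M, C i)).toReal) :=
          (ENNReal.ofReal_toReal (measure_ne_top P _)).symm
      _ ≤ ENNReal.ofReal (Real.exp (-(γ * τx)) * I) := ENNReal.ofReal_le_ofReal htoReal
  have hPS2 : P {ω | (∀ s : ℝ, 0 ≤ s → s ≤ tt → X s ω ≤ τx)
      ∧ ∃ s : ℝ, 0 ≤ s ∧ τx < X s ω} ≤ ENNReal.ofReal (Real.exp (-(γ * τx)) * I) := by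
    apply le_trans hPS
    rw [hUsup]
    exact iSup_le hfin
  have h3 : (P {ω | (∀ s : ℝ, 0 ≤ s → s ≤ tt → X s ω ≤ τx)
      ∧ ∃ s : ℝ, 0 ≤ s ∧ τx < X s ω}).toReal ≤ Real.exp (-(γ * τx)) * I := by
    calc (P _).toReal ≤ (ENNReal.ofReal (Real.exp (-(γ * τx)) * I)).toReal :=
          ENNReal.toReal_mono ENNReal.ofReal_ne_top hPS2
      _ = Real.exp (-(γ * τx)) * I := ENNReal.toReal_ofReal (by positivity)
  calc Real.exp (γ * τx) * (P {ω | (∀ s : ℝ, 0 ≤ s → s ≤ tt → X s ω ≤ τx)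
        ∧ ∃ s : ℝ, 0 ≤ s ∧ τx < X s ω}).toReal
      ≤ Real.exp (γ * τx) * (Real.exp (-(γ * τx)) * I) :=
        mul_le_mul_of_nonneg_left h3 (Real.exp_nonneg _)
    _ = I := by
        rw [← mul_assoc, ← Real.exp_add]
        simp

end RuinProof

open RuinProof in
set_option maxHeartbeats 1000000 in
/-- If `E[e^{γ X₁}] = 1` with `γ > 0`, `ψ'(γ) = E[X₁ e^{γ X₁}]` is finite and positive,
and `0 < v < ψ'(γ)`, then along `t_n → ∞`, `x_n = v t_n + o(t_n^{1/2})` one has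
`e^{γ x_n} P(t_n < τ(x_n) < ∞) → 0`.
Here `{t < τ(x) < ∞} = {∀ s ∈ [0,t], X_s ≤ x} ∩ {∃ s ≥ 0, X_s > x}`. -/
theorem ruin_after_t_vanishes
    {Ω : Type*} [MeasurableSpace Ω] (P : Measure Ω) [IsProbabilityMeasure P]
    (X : ℝ → Ω → ℝ) (hX : LevyProcess P X)
    (γ : ℝ) (hγpos : 0 < γ)
    (hγ : ∫ ω, Real.exp (γ * X 1 ω) ∂P = 1)
    -- `ψ'(γ) = E[X₁ e^{γ X₁}]` finite and positive
    (hmint : Integrable (fun ω => X 1 ω * Real.exp (γ * X 1 ω)) P)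
    (m : ℝ) (hm : m = ∫ ω, X 1 ω * Real.exp (γ * X 1 ω) ∂P) (hmpos : 0 < m)
    (v : ℝ) (hvpos : 0 < v) (hv : v < m)
    (t x : ℕ → ℝ) (ht : Tendsto t atTop atTop)
    (hx : Tendsto (fun n => (x n - v * t n) / Real.sqrt (t n)) atTop (nhds 0)) :
    Tendsto (fun n => Real.exp (γ * x n) *
        (P {ω | (∀ s : ℝ, 0 ≤ s → s ≤ t n → X s ω ≤ x n) ∧
            ∃ s : ℝ, 0 ≤ s ∧ x n < X s ω}).toReal)
      atTop (nhds 0) := by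
  classical
  set a : ℝ := (v+m)/2 with hadef
  have hva : v < a := by rw [hadef]; linarith
  have ham : a < m := by rw [hadef]; linarith
  set c : ℝ := (m - a)/4 with hcdef
  have hc : 0 < c := by rw [hcdef]; linarith
  have hapos : 0 < a := by linarith
  have haec : a + 2*c < m := by rw [hcdef]; linarith
  set η : ℕ → ℝ → ℝ := fun K y => if |y| ≤ (K:ℝ) then y else 0 with hηdef
  set ρf : ℕ → ℝ → ℝ := fun K y => if y < -(K:ℝ) then -y else 0 with hρdef
  have hηmeas : ∀ K, Measurable (η K) := fun K =>
    Measurable.ite (measurableSet_le measurable_abs measurable_const)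
      measurable_id measurable_const
  have hρmeas : ∀ K, Measurable (ρf K) := fun K =>
    Measurable.ite (measurableSet_lt measurable_id measurable_const)
      measurable_neg measurable_const
  have hρ0 : ∀ K y, 0 ≤ ρf K y := by
    intro K y
    rw [hρdef]
    dsimp only
    split_ifs with h
    · have : (0:ℝ) ≤ (K:ℝ) := by positivity
      linarith
    · exact le_rfl
  have hηρ : ∀ K y, η K y ≤ y + ρf K y := by
    intro K y
    have hK0 : (0:ℝ) ≤ (K:ℝ) := by positivity
    rw [hηdef, hρdef]
    dsimp only
    split_ifs with h1 h2 h3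
    · rcases abs_le.1 h1 with ⟨hl, _⟩; linarith
    · rcases abs_le.1 h1 with ⟨hl, _⟩; linarith
    · linarith
    · push_neg at h1 h3
      rcases abs_cases y with ⟨heq, _⟩ | ⟨heq, _⟩
      · rw [heq] at h1; linarith
      · rw [heq] at h1; linarith
  have hηD : ∀ K y, |η K y| ≤ (K:ℝ) := by
    intro K y
    rw [hηdef]
    dsimp only
    split_ifs with h
    · exact h
    · simpa using by positivity
  have hηabs : ∀ K y, |η K y| ≤ |y| := by
    intro K y
    rw [hηdef]
    dsimp only
    split_ifs with h
    · exact le_rfl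
    · simp
  have hρabs : ∀ K y, |ρf K y| ≤ |y| := by
    intro K y
    rw [hρdef]
    dsimp only
    split_ifs with h
    · rw [abs_neg]
    · simp
  have hexpX1 : Integrable (fun ω => Real.exp (γ * X 1 ω)) P :=
    exp_integrable hX hγ 1 (by norm_num) (by norm_num)
  set eseq : ℕ → ℝ := fun K => ∫ ω, η K (X 1 ω) * Real.exp (γ * X 1 ω) ∂P with heseq
  set Rseq : ℕ → ℝ := fun K => ∫ ω, ρf K (X 1 ω) * Real.exp (γ * X 1 ω) ∂P with hRseq
  have hηint : ∀ K, Integrable (fun ω => η K (X 1 ω) * Real.exp (γ * X 1 ω)) P := fun K =>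
    hexpX1.bdd_mul ((hηmeas K).comp (hX.meas 1)).aestronglyMeasurable
      (c := (K:ℝ)) (Eventually.of_forall fun ω => by simpa [Real.norm_eq_abs] using hηD K _)
  have hρint : ∀ K, Integrable (fun ω => ρf K (X 1 ω) * Real.exp (γ * X 1 ω)) P := by
    intro K
    apply hmint.mono
      (((hρmeas K).comp (hX.meas 1)).mul
        ((measurable_const.mul (hX.meas 1)).exp)).aestronglyMeasurable
    filter_upwards with ω
    show ‖ρf K (X 1 ω) * Real.exp (γ * X 1 ω)‖ ≤ ‖X 1 ω * Real.exp (γ * X 1 ω)‖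
    rw [Real.norm_eq_abs, Real.norm_eq_abs, abs_mul, abs_mul]
    exact mul_le_mul_of_nonneg_right (hρabs K _) (abs_nonneg _)
  have hmeasηexp : ∀ K, AEStronglyMeasurable
      (fun ω => η K (X 1 ω) * Real.exp (γ * X 1 ω)) P := fun K => (hηint K).1
  have htende : Tendsto eseq atTop (nhds m) := by
    rw [hm]
    apply tendsto_integral_of_dominated_convergence
      (fun ω => ‖X 1 ω * Real.exp (γ * X 1 ω)‖) hmeasηexp hmint.norm
    · intro K
      filter_upwards with ω
      rw [Real.norm_eq_abs, Real.norm_eq_abs, abs_mul, abs_mul]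
      exact mul_le_mul_of_nonneg_right (hηabs K _) (abs_nonneg _)
    · filter_upwards with ω
      apply tendsto_const_nhds.congr'
      filter_upwards [eventually_ge_atTop ⌈|X 1 ω|⌉₊] with K hK
      rw [hηdef]
      dsimp only
      rw [if_pos]
      calc |X 1 ω| ≤ (⌈|X 1 ω|⌉₊ : ℝ) := Nat.le_ceil _
        _ ≤ (K:ℝ) := by exact_mod_cast hK
  have htendR : Tendsto Rseq atTop (nhds 0) := by
    have h := tendsto_integral_of_dominated_convergence
      (μ := P) (F := fun K ω => ρf K (X 1 ω) * Real.exp (γ * X 1 ω))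
      (f := fun _ => (0:ℝ))
      (fun ω => ‖X 1 ω * Real.exp (γ * X 1 ω)‖) (fun K => (hρint K).1) hmint.norm
      (by
        intro K
        filter_upwards with ω
        rw [Real.norm_eq_abs, Real.norm_eq_abs, abs_mul, abs_mul]
        exact mul_le_mul_of_nonneg_right (hρabs K _) (abs_nonneg _))
      (by
        filter_upwards with ω
        apply tendsto_const_nhds.congr'
        filter_upwards [eventually_ge_atTop ⌈|X 1 ω|⌉₊] with K hK
        rw [hρdef]
        dsimp only
        rw [if_neg]
        · ring
        · push_neg
          have h1 : |X 1 ω| ≤ (K:ℝ) :=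
            le_trans (Nat.le_ceil _) (by exact_mod_cast hK)
          linarith [neg_abs_le (X 1 ω)])
    simpa using h
  set Nn : ℕ → ℕ := fun n => ⌊t n⌋₊ with hNndef
  set G : ℕ → ℝ := fun n => ∫ ω in {ω | X ((Nn n : ℕ):ℝ) ω ≤ x n},
    Real.exp (γ * X ((Nn n : ℕ):ℝ) ω) ∂P with hGdef
  have hG0 : ∀ n, 0 ≤ G n := fun n => setIntegral_nonneg
    (measurableSet_le (hX.meas _) measurable_const) (fun ω _ => Real.exp_nonneg _)
  have hle : ∀ᶠ n in atTop, Real.exp (γ * x n) *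
      (P {ω | (∀ s : ℝ, 0 ≤ s → s ≤ t n → X s ω ≤ x n) ∧
          ∃ s : ℝ, 0 ≤ s ∧ x n < X s ω}).toReal ≤ G n := by
    filter_upwards [ht.eventually_ge_atTop 0] with n htn0
    exact step1 hX hγ hγpos (Nn n) (Nat.floor_le htn0)
  have hxa : ∀ᶠ n in atTop, x n ≤ a * (Nn n : ℝ) := by
    have h1 := (Metric.tendsto_nhds.1 hx ((a - v)/2) (by linarith))
    filter_upwards [h1, ht.eventually_ge_atTop (max 1 (2*a/((a-v)/2)))] with n hn1 hn2
    have htn1 : 1 ≤ t n := le_trans (le_max_left _ _) hn2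
    have htbig : 2*a/((a-v)/2) ≤ t n := le_trans (le_max_right _ _) hn2
    rw [Real.dist_eq, sub_zero] at hn1
    have hsqpos : 0 < Real.sqrt (t n) := Real.sqrt_pos.2 (by linarith)
    have habs : |x n - v * t n| < (a - v)/2 * Real.sqrt (t n) := by
      rw [abs_div, abs_of_nonneg (Real.sqrt_nonneg _)] at hn1
      have := (div_lt_iff₀ hsqpos).1 hn1
      linarith [this]
    have hsqle : Real.sqrt (t n) ≤ t n := by
      nlinarith [Real.sq_sqrt (show (0:ℝ) ≤ t n by linarith), Real.sqrt_nonneg (t n),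
        sq_nonneg (Real.sqrt (t n) - 1)]
    have hx1 : x n ≤ v * t n + (a - v)/2 * t n := by
      have h2 := (abs_lt.1 habs).2
      nlinarith [(abs_lt.1 habs).1]
    have hNnge : t n - 1 < (Nn n : ℝ) := Nat.sub_one_lt_floor (t n)
    have htprod : 2*a ≤ t n * ((a - v)/2) :=
      (div_le_iff₀ (by linarith : (0:ℝ) < (a-v)/2)).1 htbig
    have h3 : v * t n + (a - v)/2 * t n ≤ a * (t n - 1) := by nlinarith
    calc x n ≤ a * (t n - 1) := by linarith
      _ ≤ a * (Nn n : ℝ) := mul_le_mul_of_nonneg_left (le_of_lt hNnge) hapos.le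
  have hGlim : Tendsto G atTop (nhds 0) := by
    rw [tendsto_order]
    constructor
    · intro b hb
      filter_upwards with n
      exact lt_of_lt_of_le hb (hG0 n)
    · intro b hb
      obtain ⟨K, hKe, hKR⟩ := (((htende.eventually (eventually_gt_nhds haec)).and
        (htendR.eventually (eventually_lt_nhds
          (show (0:ℝ) < c*b/4 by positivity)))).exists)
      have habsK : |eseq K| ≤ (K:ℝ) := by
        rw [heseq]
        dsimp only
        calc |∫ ω, η K (X 1 ω) * Real.exp (γ * X 1 ω) ∂P|
            ≤ ∫ ω, |η K (X 1 ω)| * Real.exp (γ * X 1 ω) ∂P := by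
              simpa [Real.norm_eq_abs, abs_mul, abs_of_nonneg (Real.exp_nonneg _)] using
                norm_integral_le_integral_norm
                  (fun ω => η K (X 1 ω) * Real.exp (γ * X 1 ω)) (μ := P)
          _ ≤ ∫ ω, (K:ℝ) * Real.exp (γ * X 1 ω) ∂P := by
              apply integral_mono (hexpX1.bdd_mul
                (((hηmeas K).comp (hX.meas 1)).abs.aestronglyMeasurable)
                (c := (K:ℝ)) (Eventually.of_forall fun ω => by
                  simpa [Real.norm_eq_abs, abs_abs] using hηD K _)) (hexpX1.const_mul _)
              intro ω
              exact mul_le_mul_of_nonneg_right (hηD K _) (Real.exp_nonneg _)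
          _ = (K:ℝ) := by rw [integral_const_mul, hγ, mul_one]
      set V : ℝ := ∫ ω, (η K (X 1 ω) - eseq K)^2 * Real.exp (γ * X 1 ω) ∂P with hVdef
      have hVint : Integrable (fun ω => (η K (X 1 ω) - eseq K)^2
          * Real.exp (γ * X 1 ω)) P := by
        apply hexpX1.bdd_mul (c := (2*(K:ℝ))^2)
          ((((hηmeas K).comp (hX.meas 1)).sub measurable_const).pow_const 2).aestronglyMeasurable
        refine Eventually.of_forall (fun ω => ?_)
        rw [Real.norm_eq_abs, abs_pow]
        apply pow_le_pow_left₀ (abs_nonneg _)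
        calc |η K (X 1 ω) - eseq K| ≤ |η K (X 1 ω)| + |eseq K| := abs_sub _ _
          _ ≤ (K:ℝ) + (K:ℝ) := add_le_add (hηD K _) habsK
          _ = 2*(K:ℝ) := by ring
      have hV4 : V ≤ (2*(K:ℝ))^2 := by
        rw [hVdef]
        calc ∫ ω, (η K (X 1 ω) - eseq K)^2 * Real.exp (γ * X 1 ω) ∂P
            ≤ ∫ ω, (2*(K:ℝ))^2 * Real.exp (γ * X 1 ω) ∂P := by
              apply integral_mono hVint (hexpX1.const_mul _)
              intro ω
              apply mul_le_mul_of_nonneg_right _ (Real.exp_nonneg _)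
              rw [← sq_abs]
              apply pow_le_pow_left₀ (abs_nonneg _)
              calc |η K (X 1 ω) - eseq K| ≤ |η K (X 1 ω)| + |eseq K| := abs_sub _ _
                _ ≤ (K:ℝ) + (K:ℝ) := add_le_add (hηD K _) habsK
                _ = 2*(K:ℝ) := by ring
          _ = (2*(K:ℝ))^2 := by rw [integral_const_mul, hγ, mul_one]
      set N₀ : ℕ := max 1 (⌈8*(K:ℝ)^2/(c^2*b)⌉₊ + 1) with hN₀def
      filter_upwards [hxa, ht.eventually_ge_atTop (N₀ : ℝ)] with n hxan htn
      have hNnge : N₀ ≤ Nn n := Nat.le_floor htn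
      have hNn1 : 1 ≤ Nn n := le_trans (le_max_left _ _) hNnge
      have hNnpos : (0:ℝ) < (Nn n : ℝ) := by exact_mod_cast hNn1
      have hb1 := event_bound (e := eseq K) (V := V) (R := Rseq K) (a := a) (c := c)
        hX hγ hc (hηmeas K) (hρmeas K) (hρ0 K) (hηρ K) (hηD K)
        rfl (le_of_lt hKe) (hρint K) rfl rfl hNn1 hxan
      clear_value V
      have hyNn : 8*(K:ℝ)^2/(c^2*b) < (Nn n : ℝ) := by
        calc 8*(K:ℝ)^2/(c^2*b) ≤ (⌈8*(K:ℝ)^2/(c^2*b)⌉₊ : ℝ) := Nat.le_ceil _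
          _ < (⌈8*(K:ℝ)^2/(c^2*b)⌉₊ : ℝ) + 1 := by linarith
          _ ≤ (N₀ : ℝ) := by
              rw [hN₀def]
              push_cast
              exact_mod_cast le_max_right _ _
          _ ≤ (Nn n : ℝ) := by exact_mod_cast hNnge
      have h8 : 8*(K:ℝ)^2 ≤ c^2*b*(Nn n : ℝ) := by
        have hyb : 8*(K:ℝ)^2 = (8*(K:ℝ)^2/(c^2*b)) * (c^2*b) := by field_simp
        rw [hyb]
        calc (8*(K:ℝ)^2/(c^2*b)) * (c^2*b) ≤ (Nn n : ℝ) * (c^2*b) :=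
              mul_le_mul_of_nonneg_right hyNn.le (by positivity)
          _ = c^2*b*(Nn n : ℝ) := by ring
      have hhalf : V / (c^2 * (Nn n : ℝ)) ≤ b/2 := by
        rw [div_le_iff₀ (by positivity)]
        have h2K : (2*(K:ℝ))^2 = 4*(K:ℝ)^2 := by ring
        rw [h2K] at hV4
        nlinarith [hV4, h8, hNnpos, hc, hb]
      have hquarter : Rseq K / c < b/4 := by
        rw [div_lt_iff₀ hc]
        calc Rseq K < c*b/4 := hKR
          _ = b/4*c := by ring
      calc G n ≤ V / (c^2 * (Nn n : ℝ)) + Rseq K / c := hb1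
        _ < b/2 + b/4 := by
            apply add_lt_add_of_le_of_lt hhalf hquarter
        _ < b := by linarith
  exact squeeze_zero' (Eventually.of_forall fun n =>
    mul_nonneg (Real.exp_nonneg _) ENNReal.toReal_nonneg) hle hGlim
end
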